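/- arXiv:1707.00165 — 4 statements merged into one kernel-verified Lean document; each statement's English description precedes it below -/
import Mathlib

section
/- In the random permutation model on {1,…,n}: for each fixed 1 ≤ k ≤ n, the events B_{j,k}, j = 1,…,n, are mutually independent, and for every j ≠ k one has P(B_{j,k}) = 1/|k−j|. -/
open Finset Filter Topology MeasureTheory

/-- `eventA σ j k`: in the random binary search tree built by inserting the keys
`(σ 0 : ℕ) + 1, (σ 1 : ℕ) + 1, …` (so that the keys are `{1, …, n}` and `σ` is the
insertion order), the node labelled `k` lies in the subtree rooted at the node
labelled `j`; equivalently (for `j ≠ k`), `j` occurs before all other elements of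
`{min j k, …, max j k}` in the insertion order.  For `j = k` this is the sure event. -/
def eventA {n : ℕ} (σ : Equiv.Perm (Fin n)) (j k : ℕ) : Prop :=
  ∀ jf mf : Fin n, (jf : ℕ) + 1 = j →
    min j k ≤ (mf : ℕ) + 1 → (mf : ℕ) + 1 ≤ max j k → (mf : ℕ) + 1 ≠ j →
      σ.symm jf < σ.symm mf

/-- `eventB σ j k`: the event `B_{j,k}`, i.e. `A_{j,k-1}` for `j < k`,
`A_{j,k+1}` for `j > k`, and the sure event for `j = k`. -/
def eventB {n : ℕ} (σ : Equiv.Perm (Fin n)) (j k : ℕ) : Prop :=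
  if j < k then eventA σ j (k - 1) else if k < j then eventA σ j (k + 1) else True

open Classical in
/-- probability of an event under the uniform distribution on permutations. -/
noncomputable def probPerm {n : ℕ} (E : Equiv.Perm (Fin n) → Prop) : ℝ :=
  ((Finset.univ.filter fun σ => E σ).card : ℝ) / (Fintype.card (Equiv.Perm (Fin n)) : ℝ)

/-- expectation of a random variable under the uniform distribution on permutations. -/
noncomputable def expPerm {n : ℕ} (X : Equiv.Perm (Fin n) → ℝ) : ℝ :=
  (∑ σ : Equiv.Perm (Fin n), X σ) / (Fintype.card (Equiv.Perm (Fin n)) : ℝ)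

/-- variance of a random variable under the uniform distribution on permutations. -/
noncomputable def varPerm {n : ℕ} (X : Equiv.Perm (Fin n) → ℝ) : ℝ :=
  expPerm fun σ => (X σ - expPerm X) ^ 2

open Classical in
/-- real-valued indicator of a proposition. -/
noncomputable def ind (P : Prop) : ℝ := if P then 1 else 0

/-- `depthD σ k = D_k(n)`, the depth of the node labelled `k`. -/
noncomputable def depthD {n : ℕ} (σ : Equiv.Perm (Fin n)) (k : ℕ) : ℝ :=
  (∑ j : Fin n, ind (eventA σ ((j : ℕ) + 1) k)) - 1

/-- `weightW σ k = W_k(n)`, the weighted depth of the node labelled `k`. -/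
noncomputable def weightW {n : ℕ} (σ : Equiv.Perm (Fin n)) (k : ℕ) : ℝ :=
  ∑ j : Fin n, ((j : ℕ) + 1 : ℝ) * ind (eventA σ ((j : ℕ) + 1) k)

/-- `barW σ k = \bar W_k(n) = Σ_{j=1}^n j · 1_{B_{j,k}}`. -/
noncomputable def barW {n : ℕ} (σ : Equiv.Perm (Fin n)) (k : ℕ) : ℝ :=
  ∑ j : Fin n, ((j : ℕ) + 1 : ℝ) * ind (eventB σ ((j : ℕ) + 1) k)

/-- first-order harmonic number `H^{(1)}_m = Σ_{j=1}^m 1/j`. -/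
noncomputable def H1 (m : ℕ) : ℝ := ∑ j ∈ Finset.range m, (1 : ℝ) / (j + 1)

/-- second-order harmonic number `H^{(2)}_m = Σ_{j=1}^m 1/j²`. -/
noncomputable def H2 (m : ℕ) : ℝ := ∑ j ∈ Finset.range m, (1 : ℝ) / (j + 1) ^ 2

set_option linter.unusedSectionVars false
namespace BST1

variable {n : ℕ}

lemma mem_of_fix {α : Type*} [DecidableEq α] (g : Equiv.Perm α) (s : Finset α)
    (hg : ∀ x ∉ s, g x = x) {y : α} (hy : y ∈ s) : g y ∈ s := by
  by_contra h
  have h2 : g (g y) = g y := hg _ h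
  have h3 : g y = y := g.injective h2
  rw [h3] at h; exact h hy

section rot

variable {d : ℕ} [NeZero d]

noncomputable def rot (s : Finset (Fin n)) (hs : s.card = d) (r : Fin d) :
    Equiv.Perm (Fin n) :=
  Equiv.Perm.extendDomain (Equiv.addRight r) (s.orderIsoOfFin hs).toEquiv

variable (s : Finset (Fin n)) (hs : s.card = d) (r : Fin d)

lemma rot_apply_mem {x : Fin n} (hx : x ∈ s) :
    rot s hs r x = ((s.orderIsoOfFin hs) ((s.orderIsoOfFin hs).symm ⟨x, hx⟩ + r) : Fin n) := by
  rw [rot, Equiv.Perm.extendDomain_apply_subtype _ _ hx]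
  rfl

lemma rot_mem {x : Fin n} (hx : x ∈ s) : rot s hs r x ∈ s := by
  rw [rot_apply_mem s hs r hx]
  exact Finset.coe_mem _

lemma rot_notMem {x : Fin n} (hx : x ∉ s) : rot s hs r x = x :=
  Equiv.Perm.extendDomain_apply_not_subtype _ _ hx

lemma rot_trans (r' : Fin d) : (rot s hs r).trans (rot s hs r') = rot s hs (r + r') := by
  unfold rot
  rw [Equiv.Perm.extendDomain_trans]
  congr 1
  ext x
  simp [add_assoc]

lemma rot_zero : rot s hs 0 = Equiv.refl (Fin n) := by
  unfold rot
  convert Equiv.Perm.extendDomain_refl (s.orderIsoOfFin hs).toEquiv using 2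
  ext x
  simp

lemma rot_congr {s t : Finset (Fin n)} (h : s = t) (hs : s.card = d) (ht : t.card = d)
    (r : Fin d) : rot s hs r = rot t ht r := by subst h; rfl

noncomputable def rk (s : Finset (Fin n)) (hs : s.card = d) (x : Fin n) (hx : x ∈ s) : Fin d :=
  (s.orderIsoOfFin hs).symm ⟨x, hx⟩

lemma rk_congr {s t : Finset (Fin n)} (h : s = t) (hs : s.card = d) (ht : t.card = d)
    (x : Fin n) (hx : x ∈ s) (hx' : x ∈ t) : rk s hs x hx = rk t ht x hx' := by subst h; rfl

lemma rk_rot {x : Fin n} (hx : x ∈ s) (h' : rot s hs r x ∈ s) :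
    rk s hs (rot s hs r x) h' = rk s hs x hx + r := by
  unfold rk
  rw [OrderIso.symm_apply_eq]
  apply Subtype.ext
  exact rot_apply_mem s hs r hx

lemma rk_eq_zero {x : Fin n} (hx : x ∈ s) (hm : ∀ y ∈ s, x ≤ y) : rk s hs x hx = 0 := by
  have h1 : (⟨x, hx⟩ : {y // y ∈ s}) ≤ (s.orderIsoOfFin hs) 0 := by
    exact Subtype.coe_le_coe.mp (by simpa using hm _ (Finset.coe_mem ((s.orderIsoOfFin hs) 0)))
  have h2 : rk s hs x hx ≤ 0 := by
    have := (s.orderIsoOfFin hs).symm.monotone h1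
    simpa [rk] using this
  exact le_antisymm h2 (Fin.zero_le _)

lemma le_of_rk_eq_zero {x : Fin n} (hx : x ∈ s) (h : rk s hs x hx = 0) :
    ∀ y ∈ s, x ≤ y := by
  intro y hy
  have hx0 : (⟨x, hx⟩ : {z // z ∈ s}) = (s.orderIsoOfFin hs) 0 := by
    rw [← h]; simp [rk]
  have h1 : (0 : Fin d) ≤ (s.orderIsoOfFin hs).symm ⟨y, hy⟩ := Fin.zero_le _
  have h2 := (s.orderIsoOfFin hs).monotone h1
  rw [OrderIso.apply_symm_apply] at h2
  calc x = ((s.orderIsoOfFin hs) 0 : Fin n) := congrArg Subtype.val hx0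
    _ ≤ y := h2


lemma rk_val_congr (s : Finset (Fin n)) (hs : s.card = d) {x y : Fin n} (h : x = y)
    (hx : x ∈ s) (hy : y ∈ s) : rk s hs x hx = rk s hs y hy := by subst h; rfl

end rot

lemma step (U : Finset (Fin n)) (a0 : Fin n) (ha0 : a0 ∈ U)
    (Q : Equiv.Perm (Fin n) → Prop) [DecidablePred Q]
    (hQ : ∀ (π g : Equiv.Perm (Fin n)), (∀ x ∉ U.image π, g x = x) → Q π → Q (π.trans g)) :
    (univ.filter Q).card
      = U.card * (univ.filter fun π => Q π ∧ ∀ b ∈ U, b ≠ a0 → π a0 < π b).card := by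
  classical
  haveI : NeZero U.card := ⟨Finset.card_ne_zero_of_mem ha0⟩
  have himg : ∀ π : Equiv.Perm (Fin n), (U.image π).card = U.card :=
    fun π => Finset.card_image_of_injective U π.injective
  have hfixmem : ∀ (π g : Equiv.Perm (Fin n)), (∀ x ∉ U.image π, g x = x) →
      U.image (π.trans g) = U.image π := by
    intro π g hg
    apply Finset.eq_of_subset_of_card_le
    · intro y hy
      obtain ⟨b, hb, rfl⟩ := Finset.mem_image.mp hy
      have h1 : π b ∈ U.image π := Finset.mem_image_of_mem _ hb
      have h2 := mem_of_fix g _ hg h1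
      simpa [Equiv.trans_apply] using h2
    · rw [himg, himg]
  have hmemA : ∀ π : Equiv.Perm (Fin n), π a0 ∈ U.image π :=
    fun π => Finset.mem_image_of_mem _ ha0
  have hEv_of_rk : ∀ (π : Equiv.Perm (Fin n)),
      rk (U.image π) (himg π) (π a0) (hmemA π) = 0 →
        ∀ b ∈ U, b ≠ a0 → π a0 < π b := by
    intro π h b hb hne
    have h1 := le_of_rk_eq_zero _ _ (hmemA π) h (π b) (Finset.mem_image_of_mem _ hb)
    have h2 : π a0 ≠ π b := fun he => hne (π.injective he).symm
    exact lt_of_le_of_ne h1 h2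
  have hrk_of_Ev : ∀ (π : Equiv.Perm (Fin n)),
      (∀ b ∈ U, b ≠ a0 → π a0 < π b) →
        rk (U.image π) (himg π) (π a0) (hmemA π) = 0 := by
    intro π h
    apply rk_eq_zero
    intro y hy
    obtain ⟨b, hb, rfl⟩ := Finset.mem_image.mp hy
    by_cases hba : b = a0
    · subst hba; exact le_refl _
    · exact le_of_lt (h b hb hba)
  -- rank of a rotated permutation
  have hrkrot : ∀ (π : Equiv.Perm (Fin n)) (r : Fin U.card),
      rk (U.image π) (himg π) ((π.trans (rot (U.image π) (himg π) r)) a0)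
        (by rw [Equiv.trans_apply]; exact rot_mem _ _ _ (hmemA π))
      = rk (U.image π) (himg π) (π a0) (hmemA π) + r := by
    intro π r
    have h1 := rk_rot (U.image π) (himg π) r (hmemA π) (rot_mem _ _ _ (hmemA π))
    exact Eq.trans (rk_val_congr _ _ (Equiv.trans_apply _ _ _) _ _) h1
  have key : ((univ : Finset (Fin U.card)) ×ˢ
      (univ.filter fun π : Equiv.Perm (Fin n) => Q π ∧ ∀ b ∈ U, b ≠ a0 → π a0 < π b)).card
      = (univ.filter Q).card := by
    apply Finset.card_bij
      (fun p _ => p.2.trans (rot (U.image p.2) (himg p.2) p.1))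
    · rintro ⟨r, π⟩ hp
      rw [Finset.mem_product, Finset.mem_filter] at hp
      rw [Finset.mem_filter]
      exact ⟨Finset.mem_univ _, hQ π _ (fun x hx => rot_notMem _ _ _ hx) hp.2.2.1⟩
    · rintro ⟨r1, π1⟩ h1 ⟨r2, π2⟩ h2 heq
      rw [Finset.mem_product, Finset.mem_filter] at h1 h2
      simp only at heq
      have hI1 : U.image (π1.trans (rot (U.image π1) (himg π1) r1)) = U.image π1 :=
        hfixmem _ _ (fun x hx => rot_notMem _ _ _ hx)
      have hI2 : U.image (π2.trans (rot (U.image π2) (himg π2) r2)) = U.image π2 :=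
        hfixmem _ _ (fun x hx => rot_notMem _ _ _ hx)
      have hss : U.image π1 = U.image π2 := by rw [← hI1, heq, hI2]
      have hrk1 : rk (U.image π1) (himg π1)
          ((π1.trans (rot (U.image π1) (himg π1) r1)) a0)
          (by rw [Equiv.trans_apply]; exact rot_mem _ _ _ (hmemA π1)) = r1 := by
        rw [hrkrot π1 r1, hrk_of_Ev π1 h1.2.2.2, zero_add]
      have hrk2 : rk (U.image π2) (himg π2)
          ((π2.trans (rot (U.image π2) (himg π2) r2)) a0)
          (by rw [Equiv.trans_apply]; exact rot_mem _ _ _ (hmemA π2)) = r2 := by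
        rw [hrkrot π2 r2, hrk_of_Ev π2 h2.2.2.2, zero_add]
      have hmem2 : ((π1.trans (rot (U.image π1) (himg π1) r1)) a0) ∈ U.image π2 := by
        rw [← hss]
        rw [Equiv.trans_apply]; exact rot_mem _ _ _ (hmemA π1)
      have hrr : r1 = r2 := by
        rw [← hrk1, ← hrk2]
        refine Eq.trans (rk_congr hss (himg π1) (himg π2) _ _ hmem2) ?_
        exact rk_val_congr _ _ (by rw [heq]) _ _
      have hrot : rot (U.image π1) (himg π1) r1 = rot (U.image π2) (himg π2) r2 := by
        rw [← hrr]; exact rot_congr hss _ _ r1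
      have hπ : π1 = π2 := by
        rw [← hrot] at heq
        apply Equiv.ext
        intro x
        have hx := DFunLike.congr_fun heq x
        simp only [Equiv.trans_apply] at hx
        exact (rot (U.image π1) (himg π1) r1).injective hx
      exact Prod.ext hrr hπ
    · intro π hπQ
      rw [Finset.mem_filter] at hπQ
      set s0 := U.image π with hs0
      set r := rk s0 (himg π) (π a0) (hmemA π) with hr
      set π0 := π.trans (rot s0 (himg π) (-r)) with hπ0
      have hI : U.image π0 = s0 := hfixmem _ _ (fun x hx => rot_notMem _ _ _ hx)
      have hQ0 : Q π0 := hQ π _ (fun x hx => rot_notMem _ _ _ hx) hπQ.2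
      have hrk0 : rk (U.image π0) (himg π0) (π0 a0) (hmemA π0) = 0 := by
        refine Eq.trans (rk_congr hI (himg π0) (himg π) (π0 a0) (hmemA π0)
          (hI ▸ hmemA π0)) ?_
        refine Eq.trans (hrkrot π (-r)) ?_
        rw [← hr, add_neg_cancel]
      refine ⟨(r, π0), ?_, ?_⟩
      · rw [Finset.mem_product, Finset.mem_filter]
        exact ⟨Finset.mem_univ _, Finset.mem_univ _, hQ0, hEv_of_rk π0 hrk0⟩
      · show π0.trans (rot (U.image π0) (himg π0) r) = π
        rw [rot_congr hI (himg π0) (himg π) r, hπ0, Equiv.trans_assoc, rot_trans,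
          neg_add_cancel, rot_zero, Equiv.trans_refl]
  rw [← key, Finset.card_product, Finset.card_univ, Fintype.card_fin]

lemma main_count {ι : Type*} [DecidableEq ι] (a : ι → Fin n) (T : ι → Finset (Fin n))
    (S : Finset ι)
    (h1 : ∀ i ∈ S, a i ∉ T i)
    (h2 : ∀ i ∈ S, ∀ j ∈ S, i ≠ j →
      insert (a i) (T i) ⊆ T j ∨ insert (a j) (T j) ⊆ T i ∨
        Disjoint (insert (a i) (T i)) (insert (a j) (T j))) :
    (univ.filter fun π : Equiv.Perm (Fin n) => ∀ i ∈ S, ∀ b ∈ T i, π (a i) < π b).card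
      * ∏ i ∈ S, (insert (a i) (T i)).card
      = Fintype.card (Equiv.Perm (Fin n)) := by
  classical
  induction S using Finset.strongInduction with
  | _ S IH =>
    rcases S.eq_empty_or_nonempty with rfl | hne
    · simp [Finset.card_univ]
    · obtain ⟨i0, hi0, hmin⟩ := S.exists_min_image (fun i => (insert (a i) (T i)).card) hne
      have ha0T : a i0 ∉ T i0 := h1 i0 hi0
      have hcardU : (insert (a i0) (T i0)).card = (T i0).card + 1 :=
        Finset.card_insert_of_notMem ha0T
      have hQinv : ∀ (π g : Equiv.Perm (Fin n)),
          (∀ x ∉ (insert (a i0) (T i0)).image π, g x = x) →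
          (∀ i ∈ S.erase i0, ∀ b ∈ T i, π (a i) < π b) →
          (∀ i ∈ S.erase i0, ∀ b ∈ T i, (π.trans g) (a i) < (π.trans g) b) := by
        intro π g hg hgood i hi b hb
        set U := insert (a i0) (T i0) with hU
        have hiS : i ∈ S := Finset.mem_of_mem_erase hi
        have hine : i0 ≠ i := fun h => (Finset.ne_of_mem_erase hi) h.symm
        have hsub_or : U ⊆ T i ∨ Disjoint U (insert (a i) (T i)) := by
          rcases h2 i0 hi0 i hiS hine with h | h | h
          · exact Or.inl h
          · exfalso
            have hle := Finset.card_le_card h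
            have hled := hmin i hiS
            omega
          · exact Or.inr h
        have haiU : a i ∉ U := by
          rcases hsub_or with h | h
          · exact fun hmem => h1 i hiS (h hmem)
          · exact fun hmem => (Finset.disjoint_left.mp h hmem) (Finset.mem_insert_self _ _)
        have hπa : π (a i) ∉ U.image π := by
          intro hmem
          obtain ⟨u, hu, he⟩ := Finset.mem_image.mp hmem
          exact haiU (π.injective he ▸ hu)
        simp only [Equiv.trans_apply]
        rw [hg _ hπa]
        rcases hsub_or with hsub | hdisj
        · by_cases hbU : b ∈ U
          · obtain ⟨b', hb', he⟩ :=
              Finset.mem_image.mp (mem_of_fix g _ hg (Finset.mem_image_of_mem _ hbU))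
            rw [← he]
            exact hgood i hi b' (hsub hb')
          · have hπb : π b ∉ U.image π := by
              intro hmem
              obtain ⟨u, hu, he⟩ := Finset.mem_image.mp hmem
              exact hbU (π.injective he ▸ hu)
            rw [hg _ hπb]
            exact hgood i hi b hb
        · have hbU : b ∉ U :=
            fun hmem => (Finset.disjoint_left.mp hdisj hmem) (Finset.mem_insert_of_mem hb)
          have hπb : π b ∉ U.image π := by
            intro hmem
            obtain ⟨u, hu, he⟩ := Finset.mem_image.mp hmem
            exact hbU (π.injective he ▸ hu)
          rw [hg _ hπb]
          exact hgood i hi b hb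
      have hstep := step (insert (a i0) (T i0)) (a i0) (Finset.mem_insert_self _ _)
        (fun π : Equiv.Perm (Fin n) => ∀ i ∈ S.erase i0, ∀ b ∈ T i, π (a i) < π b) hQinv
      have hfe : (univ.filter fun π : Equiv.Perm (Fin n) =>
            (∀ i ∈ S.erase i0, ∀ b ∈ T i, π (a i) < π b) ∧
              ∀ b ∈ insert (a i0) (T i0), b ≠ a i0 → π (a i0) < π b)
          = (univ.filter fun π : Equiv.Perm (Fin n) => ∀ i ∈ S, ∀ b ∈ T i, π (a i) < π b) := by
        apply Finset.filter_congr
        intro π _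
        constructor
        · rintro ⟨hq, hev⟩ i hi b hb
          by_cases hii : i = i0
          · subst hii
            exact hev b (Finset.mem_insert_of_mem hb) (fun h => ha0T (h ▸ hb))
          · exact hq i (Finset.mem_erase.mpr ⟨hii, hi⟩) b hb
        · intro h
          refine ⟨fun i hi b hb => h i (Finset.mem_of_mem_erase hi) b hb, fun b hbU hbne => ?_⟩
          rcases Finset.mem_insert.mp hbU with h' | h'
          · exact absurd h' hbne
          · exact h i0 hi0 b h'
      have hIH := IH (S.erase i0) (Finset.erase_ssubset hi0)
        (fun i hi => h1 i (Finset.mem_of_mem_erase hi))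
        (fun i hi j hj hij => h2 i (Finset.mem_of_mem_erase hi) j (Finset.mem_of_mem_erase hj) hij)
      rw [hstep, hfe] at hIH
      rw [← Finset.mul_prod_erase S _ hi0, ← hIH]
      ring

def Tdef (n k : ℕ) (i : Fin n) : Finset (Fin n) :=
  univ.filter fun b => (b : ℕ) ≠ (i : ℕ) ∧
    (((i : ℕ) + 1 < k ∧ (i : ℕ) ≤ (b : ℕ) ∧ (b : ℕ) + 1 < k) ∨
     (k < (i : ℕ) + 1 ∧ k ≤ (b : ℕ) ∧ (b : ℕ) ≤ (i : ℕ)))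

lemma notMem_Tdef (k : ℕ) (i : Fin n) : i ∉ Tdef n k i := by simp [Tdef]

lemma h2app (k : ℕ) (i j : Fin n) (hij : i ≠ j) :
    insert i (Tdef n k i) ⊆ Tdef n k j ∨ insert j (Tdef n k j) ⊆ Tdef n k i ∨
      Disjoint (insert i (Tdef n k i)) (insert j (Tdef n k j)) := by
  have hvij : (i : ℕ) ≠ (j : ℕ) := fun h => hij (Fin.ext h)
  rcases Nat.lt_trichotomy ((i : ℕ) + 1) k with hi | hi | hi <;>
    rcases Nat.lt_trichotomy ((j : ℕ) + 1) k with hj | hj | hj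
  · -- both left
    rcases Nat.lt_or_ge (i : ℕ) (j : ℕ) with h | h
    · refine Or.inr (Or.inl ?_)
      intro x hx
      simp only [Finset.mem_insert, Tdef, Finset.mem_filter, Finset.mem_univ, true_and,
        Fin.ext_iff] at hx ⊢
      omega
    · refine Or.inl ?_
      intro x hx
      simp only [Finset.mem_insert, Tdef, Finset.mem_filter, Finset.mem_univ, true_and,
        Fin.ext_iff] at hx ⊢
      omega
  all_goals try (
    refine Or.inr (Or.inr ?_)
    rw [Finset.disjoint_left]
    intro x hx hx'
    simp only [Finset.mem_insert, Tdef, Finset.mem_filter, Finset.mem_univ, true_and,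
      Fin.ext_iff] at hx hx'
    omega)
  -- both right
  rcases Nat.lt_or_ge (i : ℕ) (j : ℕ) with h | h
  · refine Or.inl ?_
    intro x hx
    simp only [Finset.mem_insert, Tdef, Finset.mem_filter, Finset.mem_univ, true_and,
      Fin.ext_iff] at hx ⊢
    omega
  · refine Or.inr (Or.inl ?_)
    intro x hx
    simp only [Finset.mem_insert, Tdef, Finset.mem_filter, Finset.mem_univ, true_and,
      Fin.ext_iff] at hx ⊢
    omega

lemma card_finfilter (p : ℕ → Prop) [DecidablePred p] :
    (univ.filter fun b : Fin n => p (b : ℕ)).card = ((Finset.range n).filter p).card := by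
  apply Finset.card_bij (s := univ.filter fun b : Fin n => p (b : ℕ))
    (t := (Finset.range n).filter p) (fun b _ => (b : ℕ))
  · intro b hb
    simp only [Finset.mem_filter, Finset.mem_univ, true_and] at hb
    simp only [Finset.mem_filter, Finset.mem_range]
    exact ⟨b.2, hb⟩
  · intro b _ b' _ h
    exact Fin.ext h
  · intro m hm
    simp only [Finset.mem_filter, Finset.mem_range] at hm
    exact ⟨⟨m, hm.1⟩, by simp [hm.2], rfl⟩

lemma card_insert_Tdef (k : ℕ) (hk1 : 1 ≤ k) (hk2 : k ≤ n) (i : Fin n) :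
    (insert i (Tdef n k i)).card
      = if (i : ℕ) + 1 < k then k - ((i : ℕ) + 1)
        else if k < (i : ℕ) + 1 then (i : ℕ) + 1 - k else 1 := by
  rcases Nat.lt_trichotomy ((i : ℕ) + 1) k with hi | hi | hi
  · rw [if_pos hi]
    have he : insert i (Tdef n k i)
        = univ.filter fun b : Fin n => (i : ℕ) ≤ (b : ℕ) ∧ (b : ℕ) + 1 < k := by
      ext b
      simp only [Finset.mem_insert, Tdef, Finset.mem_filter, Finset.mem_univ, true_and,
        Fin.ext_iff]
      omega
    rw [he, card_finfilter (fun m => (i : ℕ) ≤ m ∧ m + 1 < k)]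
    have he2 : (Finset.range n).filter (fun m => (i : ℕ) ≤ m ∧ m + 1 < k)
        = Finset.Ico (i : ℕ) (k - 1) := by
      ext m
      simp only [Finset.mem_filter, Finset.mem_range, Finset.mem_Ico]
      omega
    rw [he2, Nat.card_Ico]
    omega
  · rw [if_neg (by omega), if_neg (by omega)]
    have he : Tdef n k i = ∅ := by
      ext b
      simp only [Tdef, Finset.mem_filter, Finset.mem_univ, true_and, Finset.notMem_empty,
        iff_false]
      omega
    rw [he]
    simp
  · rw [if_neg (by omega), if_pos hi]
    have he : insert i (Tdef n k i)
        = univ.filter fun b : Fin n => k ≤ (b : ℕ) ∧ (b : ℕ) ≤ (i : ℕ) := by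
      ext b
      simp only [Finset.mem_insert, Tdef, Finset.mem_filter, Finset.mem_univ, true_and,
        Fin.ext_iff]
      omega
    rw [he, card_finfilter (fun m => k ≤ m ∧ m ≤ (i : ℕ))]
    have he2 : (Finset.range n).filter (fun m => k ≤ m ∧ m ≤ (i : ℕ))
        = Finset.Ico k ((i : ℕ) + 1) := by
      ext m
      simp only [Finset.mem_filter, Finset.mem_range, Finset.mem_Ico]
      have := i.2
      omega
    rw [he2, Nat.card_Ico]

lemma eventB_iff (k : ℕ) (hk1 : 1 ≤ k) (σ : Equiv.Perm (Fin n)) (i : Fin n) :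
    eventB σ ((i : ℕ) + 1) k ↔ ∀ b ∈ Tdef n k i, σ.symm i < σ.symm b := by
  rcases Nat.lt_trichotomy ((i : ℕ) + 1) k with hik | hik | hik
  · rw [eventB, if_pos hik]
    constructor
    · intro h b hb
      simp only [Tdef, Finset.mem_filter, Finset.mem_univ, true_and] at hb
      exact h i b rfl (by omega) (by omega) (by omega)
    · intro h jf mf h1 h2 h3 h4
      have hjf : jf = i := Fin.ext (by omega)
      subst hjf
      refine h mf ?_
      simp only [Tdef, Finset.mem_filter, Finset.mem_univ, true_and]
      omega
  · rw [eventB, if_neg (by omega), if_neg (by omega)]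
    constructor
    · intro _ b hb
      simp only [Tdef, Finset.mem_filter, Finset.mem_univ, true_and] at hb
      omega
    · intro _
      trivial
  · rw [eventB, if_neg (by omega), if_pos hik]
    constructor
    · intro h b hb
      simp only [Tdef, Finset.mem_filter, Finset.mem_univ, true_and] at hb
      exact h i b rfl (by omega) (by omega) (by omega)
    · intro h jf mf h1 h2 h3 h4
      have hjf : jf = i := Fin.ext (by omega)
      subst hjf
      refine h mf ?_
      simp only [Tdef, Finset.mem_filter, Finset.mem_univ, true_and]
      omega


lemma filter_inst_irrel {α : Type*} (p : α → Prop) (h1 h2 : DecidablePred p) (s : Finset α) :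
    @Finset.filter _ p h1 s = @Finset.filter _ p h2 s := by
  have h : h1 = h2 := funext fun a => Subsingleton.elim _ _
  rw [h]

lemma filter_iff {α : Type*} (p q : α → Prop) (h1 : DecidablePred p) {h2 : DecidablePred q}
    (s : Finset α) (h : ∀ x, p x ↔ q x) :
    @Finset.filter _ p h1 s = @Finset.filter _ q h2 s := by
  have hpq : p = q := funext fun x => propext (h x)
  subst hpq
  exact filter_inst_irrel _ _ _ _

lemma probPerm_congr {E E' : Equiv.Perm (Fin n) → Prop} (h : ∀ σ, E σ ↔ E' σ) :
    probPerm E = probPerm E' := by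
  have he : E = E' := funext fun σ => propext (h σ)
  rw [he]

lemma card_symm (p : Equiv.Perm (Fin n) → Prop)
    {h1 : DecidablePred fun σ : Equiv.Perm (Fin n) => p σ.symm} {h2 : DecidablePred p} :
    (@Finset.filter _ (fun σ : Equiv.Perm (Fin n) => p σ.symm) h1 univ).card
      = (@Finset.filter _ p h2 univ).card := by
  apply Finset.card_bij (fun σ _ => σ.symm)
  · intro σ hσ
    simp only [Finset.mem_filter, Finset.mem_univ, true_and] at hσ ⊢
    exact hσ
  · intro σ _ σ' _ h
    rw [← Equiv.symm_symm σ, h, Equiv.symm_symm]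
  · intro π hπ
    simp only [Finset.mem_filter, Finset.mem_univ, true_and] at hπ
    exact ⟨π.symm, by simpa using hπ, by simp⟩

lemma main_count' {ι : Type*} [DecidableEq ι] (a : ι → Fin n) (T : ι → Finset (Fin n))
    (S : Finset ι)
    (h1 : ∀ i ∈ S, a i ∉ T i)
    (h2 : ∀ i ∈ S, ∀ j ∈ S, i ≠ j →
      insert (a i) (T i) ⊆ T j ∨ insert (a j) (T j) ⊆ T i ∨
        Disjoint (insert (a i) (T i)) (insert (a j) (T j)))
    {inst : DecidablePred fun π : Equiv.Perm (Fin n) => ∀ i ∈ S, ∀ b ∈ T i, π (a i) < π b} :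
    (@Finset.filter _ (fun π : Equiv.Perm (Fin n) => ∀ i ∈ S, ∀ b ∈ T i, π (a i) < π b)
        inst univ).card
      * ∏ i ∈ S, (insert (a i) (T i)).card
      = Fintype.card (Equiv.Perm (Fin n)) := by
  have base := main_count a T S h1 h2
  rwa [filter_inst_irrel _ _ inst univ] at base

lemma F1 (k : ℕ) (hk1 : 1 ≤ k) (_hk2 : k ≤ n) (S : Finset (Fin n))
    {inst : DecidablePred fun σ : Equiv.Perm (Fin n) => ∀ i ∈ S, eventB σ ((i : ℕ) + 1) k} :
    (@Finset.filter _ (fun σ : Equiv.Perm (Fin n) => ∀ i ∈ S, eventB σ ((i : ℕ) + 1) k)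
        inst univ).card
      * ∏ i ∈ S, (insert i (Tdef n k i)).card = Fintype.card (Equiv.Perm (Fin n)) := by
  classical
  have e1 : (@Finset.filter _ (fun σ : Equiv.Perm (Fin n) => ∀ i ∈ S, eventB σ ((i : ℕ) + 1) k)
        inst univ)
      = univ.filter fun σ : Equiv.Perm (Fin n) =>
          ∀ i ∈ S, ∀ b ∈ Tdef n k i, σ.symm i < σ.symm b := by
    refine filter_iff _ _ inst univ ?_
    intro σ
    constructor
    · intro h i hi
      exact (eventB_iff k hk1 σ i).1 (h i hi)
    · intro h i hi
      exact (eventB_iff k hk1 σ i).2 (h i hi)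
  rw [e1]
  have e2 : (univ.filter fun σ : Equiv.Perm (Fin n) =>
        ∀ i ∈ S, ∀ b ∈ Tdef n k i, σ.symm i < σ.symm b).card
      = (univ.filter fun π : Equiv.Perm (Fin n) =>
          ∀ i ∈ S, ∀ b ∈ Tdef n k i, π i < π b).card :=
    card_symm (fun π : Equiv.Perm (Fin n) => ∀ i ∈ S, ∀ b ∈ Tdef n k i, π i < π b)
  rw [e2]
  exact main_count' (fun i => i) (Tdef n k) S (fun i _ => notMem_Tdef k i)
    (fun i _ j _ hij => h2app k i j hij)

end BST1

/-- In the random permutation model on `{1,…,n}`: for each fixed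
`1 ≤ k ≤ n`, the events `B_{j,k}`, `j = 1,…,n`, are mutually independent, and for every
`j ≠ k` one has `P(B_{j,k}) = 1/|k−j|`. -/
theorem eventB_independent_and_prob (n k : ℕ) (hk1 : 1 ≤ k) (hk2 : k ≤ n) :
    (∀ S : Finset (Fin n),
      probPerm (fun σ : Equiv.Perm (Fin n) => ∀ j ∈ S, eventB σ ((j : ℕ) + 1) k)
        = ∏ j ∈ S, probPerm (fun σ : Equiv.Perm (Fin n) => eventB σ ((j : ℕ) + 1) k)) ∧
    (∀ j : ℕ, 1 ≤ j → j ≤ n → j ≠ k →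
      probPerm (fun σ : Equiv.Perm (Fin n) => eventB σ j k) = 1 / |(k : ℝ) - (j : ℝ)|) := by
  classical
  have hN0 : (0 : ℝ) < (Fintype.card (Equiv.Perm (Fin n)) : ℝ) := by
    exact_mod_cast Fintype.card_pos
  have hdpos : ∀ i : Fin n, 0 < (insert i (BST1.Tdef n k i)).card :=
    fun i => Finset.card_pos.mpr ⟨i, Finset.mem_insert_self _ _⟩
  have probS : ∀ S : Finset (Fin n),
      probPerm (fun σ : Equiv.Perm (Fin n) => ∀ j ∈ S, eventB σ ((j : ℕ) + 1) k)
        = 1 / ∏ i ∈ S, ((insert i (BST1.Tdef n k i)).card : ℝ) := by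
    intro S
    have hD : (0 : ℝ) < ∏ i ∈ S, ((insert i (BST1.Tdef n k i)).card : ℝ) :=
      Finset.prod_pos fun i _ => by exact_mod_cast hdpos i
    simp only [probPerm]
    rw [div_eq_div_iff hN0.ne' hD.ne', one_mul, ← Nat.cast_prod]
    exact_mod_cast BST1.F1 k hk1 hk2 S
  have hsingle : ∀ j : Fin n,
      probPerm (fun σ : Equiv.Perm (Fin n) => eventB σ ((j : ℕ) + 1) k)
        = 1 / ((insert j (BST1.Tdef n k j)).card : ℝ) := by
    intro j
    have h1 : probPerm (fun σ : Equiv.Perm (Fin n) => eventB σ ((j : ℕ) + 1) k)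
        = probPerm (fun σ : Equiv.Perm (Fin n) =>
            ∀ i ∈ ({j} : Finset (Fin n)), eventB σ ((i : ℕ) + 1) k) :=
      BST1.probPerm_congr (fun σ => by simp)
    rw [h1, probS {j}, Finset.prod_singleton]
  constructor
  · intro S
    rw [probS S, Finset.prod_congr rfl (fun j _ => hsingle j), Finset.prod_div_distrib,
      Finset.prod_const_one]
  · intro j hj1 hjn hjk
    set i : Fin n := ⟨j - 1, by omega⟩ with hi
    have h0 : (i : ℕ) = j - 1 := rfl
    have hij : (i : ℕ) + 1 = j := by omega
    rw [← hij, hsingle i]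
    congr 1
    rw [BST1.card_insert_Tdef k hk1 hk2 i]
    rcases Nat.lt_trichotomy ((i : ℕ) + 1) k with h | h | h
    · rw [if_pos h, Nat.cast_sub (by omega),
        abs_of_pos (sub_pos.mpr (by exact_mod_cast h))]
    · exfalso
      omega
    · rw [if_neg (by omega), if_pos h, Nat.cast_sub (by omega),
        abs_of_neg (sub_neg.mpr (by exact_mod_cast h)), neg_sub]
end

section
/- In the random permutation model on {1,…,n}: for every 1 ≤ k ≤ n, the expectation of \bar W_k(n) := Σ_{j=1}^n j·1_{B_{j,k}} equals k(H^{(1)}_{k,n} − 1) + n + 1. -/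
open Finset Filter Topology MeasureTheory

section AuxiliaryLemmas

open Classical in
lemma eventE_card_eq {n : ℕ} (T : Finset (Fin n)) (x z : Fin n) (hx : x ∈ T) (hz : z ∈ T) :
    (Finset.univ.filter fun π : Equiv.Perm (Fin n) => ∀ y ∈ T, y ≠ z → π z < π y).card
  = (Finset.univ.filter fun π : Equiv.Perm (Fin n) => ∀ y ∈ T, y ≠ x → π x < π y).card := by
  have key : ∀ (a b : Fin n), a ∈ T → b ∈ T →
      ∀ π : Equiv.Perm (Fin n), (∀ y ∈ T, y ≠ a → π a < π y) →
        ∀ y ∈ T, y ≠ b → (π * Equiv.swap b a) b < (π * Equiv.swap b a) y := by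
    intro a b ha hb π hπ y hy hyb
    have h1 : (π * Equiv.swap b a) b = π a := by
      simp [Equiv.Perm.mul_apply, Equiv.swap_apply_left]
    rw [h1]
    by_cases hya : y = a
    · subst hya
      have h2 : (π * Equiv.swap b y) y = π b := by
        simp [Equiv.Perm.mul_apply, Equiv.swap_apply_right]
      rw [h2]
      exact hπ b hb (Ne.symm hyb)
    · have h2 : (π * Equiv.swap b a) y = π y := by
        simp [Equiv.Perm.mul_apply, Equiv.swap_apply_of_ne_of_ne hyb hya]
      rw [h2]
      exact hπ y hy hya
  refine Finset.card_bij' (fun π _ => π * Equiv.swap x z) (fun π _ => π * Equiv.swap z x)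
    ?_ ?_ ?_ ?_
  · intro π hπ
    simp only [Finset.mem_filter, Finset.mem_univ, true_and] at hπ ⊢
    exact key z x hz hx π hπ
  · intro π hπ
    simp only [Finset.mem_filter, Finset.mem_univ, true_and] at hπ ⊢
    exact key x z hx hz π hπ
  · intro π hπ
    show π * Equiv.swap x z * Equiv.swap z x = π
    rw [mul_assoc, Equiv.swap_comm x z, Equiv.swap_mul_self, mul_one]
  · intro π hπ
    show π * Equiv.swap z x * Equiv.swap x z = π
    rw [mul_assoc, Equiv.swap_comm z x, Equiv.swap_mul_self, mul_one]

open Classical in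
lemma count_min {n : ℕ} (T : Finset (Fin n)) (x : Fin n) (hx : x ∈ T) :
    (Finset.univ.filter fun π : Equiv.Perm (Fin n) => ∀ y ∈ T, y ≠ x → π x < π y).card * T.card
      = Fintype.card (Equiv.Perm (Fin n)) := by
  have hTne : T.Nonempty := ⟨x, hx⟩
  have key : (Finset.univ : Finset (Equiv.Perm (Fin n))).card
      = ∑ z ∈ T, (Finset.univ.filter fun π : Equiv.Perm (Fin n) =>
          ∀ y ∈ T, y ≠ z → π z < π y).card := by
    have hmem : ∀ π : Equiv.Perm (Fin n), π ∈ (Finset.univ : Finset (Equiv.Perm (Fin n))) →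
        π.symm ((T.image π).min' (hTne.image π)) ∈ T := by
      intro π _
      obtain ⟨a, ha, hπa⟩ := Finset.mem_image.mp ((T.image π).min'_mem (hTne.image π))
      rw [← hπa, Equiv.symm_apply_apply]
      exact ha
    rw [Finset.card_eq_sum_card_fiberwise hmem]
    refine Finset.sum_congr rfl fun z hz => ?_
    congr 1
    ext π
    simp only [Finset.mem_filter, Finset.mem_univ, true_and]
    constructor
    · intro h y hy hyz
      have hπz : π z = (T.image π).min' (hTne.image π) := by
        have := congrArg π h
        rw [Equiv.apply_symm_apply] at this; exact this.symm
      have hle : π z ≤ π y := hπz ▸ (T.image π).min'_le (π y) (Finset.mem_image_of_mem π hy)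
      exact lt_of_le_of_ne hle (fun hc => hyz (π.injective hc.symm))
    · intro h
      have hπz : π z = (T.image π).min' (hTne.image π) := by
        refine le_antisymm ?_ ((T.image π).min'_le (π z) (Finset.mem_image_of_mem π hz))
        refine Finset.le_min' _ _ _ fun b hb => ?_
        obtain ⟨y, hy, rfl⟩ := Finset.mem_image.mp hb
        by_cases hyz : y = z
        · subst hyz; exact le_rfl
        · exact (h y hy hyz).le
      rw [← hπz, Equiv.symm_apply_apply]
  have key2 : ∑ z ∈ T, (Finset.univ.filter fun π : Equiv.Perm (Fin n) =>
      ∀ y ∈ T, y ≠ z → π z < π y).card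
      = T.card * (Finset.univ.filter fun π : Equiv.Perm (Fin n) =>
          ∀ y ∈ T, y ≠ x → π x < π y).card := by
    rw [Finset.sum_congr rfl fun z hz => eventE_card_eq T x z hx hz]
    rw [Finset.sum_const, smul_eq_mul]
  rw [mul_comm, ← key2, ← key, Finset.card_univ]

open Classical in
lemma probPerm_eventA {n j m : ℕ} (hj1 : 1 ≤ j) (hjn : j ≤ n) (hm1 : 1 ≤ m) (hmn : m ≤ n) :
    probPerm (fun σ : Equiv.Perm (Fin n) => eventA σ j m)
      = 1 / (((max j m - min j m : ℕ) : ℝ) + 1) := by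
  classical
  set jf : Fin n := ⟨j - 1, by omega⟩ with hjf
  have hjfv : (jf : ℕ) + 1 = j := by simp [hjf]; omega
  set S : Finset (Fin n) := Finset.univ.filter
    (fun y : Fin n => min j m ≤ (y : ℕ) + 1 ∧ (y : ℕ) + 1 ≤ max j m ∧ (y : ℕ) + 1 ≠ j) with hS
  have hjfS : jf ∉ S := by
    simp only [hS, Finset.mem_filter]
    rintro ⟨-, -, -, h⟩
    exact h hjfv
  set T : Finset (Fin n) := insert jf S with hT
  have hxT : jf ∈ T := Finset.mem_insert_self _ _
  have hequiv : ∀ σ : Equiv.Perm (Fin n),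
      eventA σ j m ↔ ∀ y ∈ T, y ≠ jf → σ.symm jf < σ.symm y := by
    intro σ
    constructor
    · intro h y hy hyjf
      have hyS : y ∈ S := by
        rcases Finset.mem_insert.mp hy with h' | h'
        · exact absurd h' hyjf
        · exact h'
      simp only [hS, Finset.mem_filter] at hyS
      exact h jf y hjfv hyS.2.1 hyS.2.2.1 hyS.2.2.2
    · intro h jf' mf hjf' h1 h2 h3
      have : jf' = jf := Fin.ext (by omega)
      subst this
      have hmfS : mf ∈ S := by
        simp only [hS, Finset.mem_filter]
        exact ⟨Finset.mem_univ _, h1, h2, h3⟩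
      have hmfjf : mf ≠ jf := by
        intro hc; apply h3; rw [hc]; exact hjfv
      exact h mf (Finset.mem_insert_of_mem hmfS) hmfjf
  have hScard : S.card = max j m - min j m := by
    have : S.card = ((Finset.Icc (min j m) (max j m)).erase j).card := by
      refine Finset.card_bij' (fun y _ => (y : ℕ) + 1)
        (fun b hb => ⟨b - 1, ?_⟩) ?_ ?_ ?_ ?_
      · have hb' := Finset.mem_erase.mp hb
        have := Finset.mem_Icc.mp hb'.2
        have : b ≤ n := le_trans this.2 (max_le hjn hmn)
        have hb1 : 1 ≤ b := le_trans (le_min hj1 hm1) (Finset.mem_Icc.mp (Finset.mem_erase.mp hb).2).1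
        omega
      · intro y hy
        simp only [hS, Finset.mem_filter] at hy
        simp only [Finset.mem_erase, Finset.mem_Icc]
        exact ⟨hy.2.2.2, hy.2.1, hy.2.2.1⟩
      · intro b hb
        have hb' := Finset.mem_erase.mp hb
        have hbi := Finset.mem_Icc.mp hb'.2
        have hb1 : 1 ≤ b := le_trans (le_min hj1 hm1) hbi.1
        simp only [hS, Finset.mem_filter]
        refine ⟨Finset.mem_univ _, ?_, ?_, ?_⟩
        · show j ⊓ m ≤ (b - 1) + 1; omega
        · show (b - 1) + 1 ≤ j ⊔ m; omega
        · show (b - 1) + 1 ≠ j; omega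
      · intro y hy; apply Fin.ext; simp
      · intro b hb
        have hb' := Finset.mem_erase.mp hb
        have hbi := Finset.mem_Icc.mp hb'.2
        have hb1 : 1 ≤ b := le_trans (le_min hj1 hm1) hbi.1
        simp; omega
    rw [this, Finset.card_erase_of_mem, Nat.card_Icc]
    · omega
    · exact Finset.mem_Icc.mpr ⟨min_le_left _ _, le_max_left _ _⟩
  have hTcard : T.card = max j m - min j m + 1 := by
    rw [hT, Finset.card_insert_of_notMem hjfS, hScard]
  have hcard1 : (Finset.univ.filter fun σ : Equiv.Perm (Fin n) => eventA σ j m).card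
      = (Finset.univ.filter fun π : Equiv.Perm (Fin n) => ∀ y ∈ T, y ≠ jf → π jf < π y).card := by
    refine Finset.card_bij' (fun σ _ => σ.symm) (fun π _ => π.symm) ?_ ?_ ?_ ?_
    · intro σ hσ
      simp only [Finset.mem_filter, Finset.mem_univ, true_and] at hσ ⊢
      exact (hequiv σ).mp hσ
    · intro π hπ
      simp only [Finset.mem_filter, Finset.mem_univ, true_and] at hπ ⊢
      rw [hequiv]
      simpa using hπ
    · intro σ _; simp
    · intro π _; simp
  have hcount := count_min T jf hxT
  rw [probPerm, hcard1]
  have hN : (0:ℝ) < (Fintype.card (Equiv.Perm (Fin n)) : ℝ) := by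
    exact_mod_cast Fintype.card_pos
  have hd : (0:ℝ) < ((max j m - min j m : ℕ):ℝ) + 1 := by positivity
  rw [div_eq_div_iff hN.ne' hd.ne', one_mul]
  calc ((Finset.univ.filter fun π : Equiv.Perm (Fin n) => ∀ y ∈ T, y ≠ jf → π jf < π y).card : ℝ)
      * (((max j m - min j m : ℕ):ℝ) + 1)
      = (((Finset.univ.filter fun π : Equiv.Perm (Fin n) => ∀ y ∈ T, y ≠ jf → π jf < π y).card
          * T.card : ℕ) : ℝ) := by rw [hTcard]; push_cast; ring
    _ = _ := by rw [hcount]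

/-- value of the per-term probability `P(B_{j',k})`. -/
noncomputable def pvAux (k j' : ℕ) : ℝ :=
  if j' < k then 1/((k - j' : ℕ):ℝ) else if k < j' then 1/((j' - k : ℕ):ℝ) else 1

open Classical in
lemma probPerm_eventB {n k j : ℕ} (hk1 : 1 ≤ k) (hk2 : k ≤ n) (hj1 : 1 ≤ j) (hjn : j ≤ n) :
    probPerm (fun σ : Equiv.Perm (Fin n) => eventB σ j k) = pvAux k j := by
  rcases lt_trichotomy j k with h | h | h
  · have hB : (fun σ : Equiv.Perm (Fin n) => eventB σ j k) = fun σ => eventA σ j (k-1) := by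
      funext σ; simp [eventB, h]
    rw [hB, probPerm_eventA hj1 hjn (by omega) (by omega)]
    rw [pvAux, if_pos h]
    have h1 : max j (k-1) - min j (k-1) = k - j - 1 := by omega
    rw [h1]
    have h2 : ((k-j-1:ℕ):ℝ) + 1 = ((k-j:ℕ):ℝ) := by
      have h3 : (k-j-1)+1 = k-j := by omega
      exact_mod_cast congrArg (Nat.cast : ℕ → ℝ) h3
    rw [h2]
  · subst h
    have hB : (fun σ : Equiv.Perm (Fin n) => eventB σ j j) = fun _ => True := by
      funext σ; simp [eventB]
    rw [hB, pvAux, if_neg (lt_irrefl j), if_neg (lt_irrefl j), probPerm]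
    rw [Finset.filter_true, Finset.card_univ]
    have hN : (0:ℝ) < (Fintype.card (Equiv.Perm (Fin n)) : ℝ) := by
      exact_mod_cast Fintype.card_pos
    exact div_self hN.ne'
  · have hB : (fun σ : Equiv.Perm (Fin n) => eventB σ j k) = fun σ => eventA σ j (k+1) := by
      funext σ; simp [eventB, h, not_lt_of_gt h]
    rw [hB, probPerm_eventA hj1 hjn (by omega) (by omega)]
    rw [pvAux, if_neg (not_lt_of_gt h), if_pos h]
    have h1 : max j (k+1) - min j (k+1) = j - k - 1 := by omega
    rw [h1]
    have h2 : ((j-k-1:ℕ):ℝ) + 1 = ((j-k:ℕ):ℝ) := by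
      have h3 : (j-k-1)+1 = j-k := by omega
      exact_mod_cast congrArg (Nat.cast : ℕ → ℝ) h3
    rw [h2]

open Classical in
lemma expPerm_barW_eq (n k : ℕ) :
    expPerm (fun σ : Equiv.Perm (Fin n) => barW σ k)
      = ∑ j : Fin n, (((j:ℕ):ℝ)+1) *
          probPerm (fun σ : Equiv.Perm (Fin n) => eventB σ ((j:ℕ)+1) k) := by
  have hind : ∀ (E : Equiv.Perm (Fin n) → Prop),
      (∑ σ : Equiv.Perm (Fin n), ind (E σ))
        = ((Finset.univ.filter fun σ => E σ).card : ℝ) := by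
    intro E
    rw [← Finset.sum_boole]
    refine Finset.sum_congr rfl fun σ _ => ?_
    unfold ind
    congr
  rw [expPerm]
  have h1 : (∑ σ : Equiv.Perm (Fin n), barW σ k)
      = ∑ j : Fin n, (((j:ℕ):ℝ)+1) *
          ((Finset.univ.filter fun σ : Equiv.Perm (Fin n) => eventB σ ((j:ℕ)+1) k).card : ℝ) := by
    simp only [barW]
    rw [Finset.sum_comm]
    refine Finset.sum_congr rfl fun j _ => ?_
    rw [← Finset.mul_sum, hind]
  rw [h1, Finset.sum_div]
  refine Finset.sum_congr rfl fun j _ => ?_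
  rw [probPerm, mul_div_assoc]

lemma H1_succ (m : ℕ) : H1 (m+1) = H1 m + 1/((m:ℝ)+1) := by
  simp [H1, Finset.sum_range_succ]

lemma sum_main_aux (k : ℕ) (hk : 1 ≤ k) : ∀ n, k ≤ n →
    ∑ j ∈ Finset.range n, (((j:ℕ):ℝ)+1) * pvAux k (j+1)
      = (k:ℝ) * (H1 (k-1) + H1 (n-k) - 1) + n + 1 := by
  refine Nat.le_induction ?_ ?_
  · have hrest : ∑ j ∈ Finset.range (k-1), (((j:ℕ):ℝ)+1) * pvAux k (j+1)
        = (k:ℝ) * H1 (k-1) - ((k:ℝ) - 1) := by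
      rw [← Finset.sum_range_reflect]
      have hcongr : ∀ j ∈ Finset.range (k-1),
          (((k-1-1-j:ℕ):ℝ)+1) * pvAux k ((k-1-1-j)+1)
            = (k:ℝ) * (1/((j:ℝ)+1)) - 1 := by
        intro j hj
        have hjlt : j < k - 1 := Finset.mem_range.mp hj
        have h1 : pvAux k ((k-1-1-j)+1) = 1/(((j:ℕ):ℝ)+1) := by
          have hlt : (k-1-1-j)+1 < k := by omega
          have h2 : k - ((k-1-1-j)+1) = j + 1 := by omega
          rw [pvAux, if_pos hlt, h2]
          push_cast
          ring
        rw [h1]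
        have h3 : ((k-1-1-j:ℕ):ℝ) = (k:ℝ) - (j+2) := by
          have h4 : (k-1-1-j) + (j+2) = k := by omega
          have h5 := congrArg (Nat.cast : ℕ → ℝ) h4
          push_cast at h5
          linarith
        rw [h3]
        have h4 : ((j:ℕ):ℝ)+1 ≠ 0 := by positivity
        field_simp
        ring
      rw [Finset.sum_congr rfl hcongr, Finset.sum_sub_distrib, ← Finset.mul_sum,
        Finset.sum_const, Finset.card_range, ← H1]
      have hc : ((k-1:ℕ):ℝ) = (k:ℝ) - 1 := by
        rw [Nat.cast_sub hk]; norm_num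
      rw [nsmul_eq_mul, mul_one, hc]
    have hske : k = (k-1)+1 := by omega
    have hsplit : ∑ j ∈ Finset.range k, (((j:ℕ):ℝ)+1) * pvAux k (j+1)
        = ∑ j ∈ Finset.range (k-1), (((j:ℕ):ℝ)+1) * pvAux k (j+1)
          + (((k-1:ℕ):ℝ)+1) * pvAux k ((k-1)+1) := by
      rw [← Finset.sum_range_succ, ← hske]
    rw [hsplit, hrest]
    have hlast : (((k-1:ℕ):ℝ)+1) * pvAux k ((k-1)+1) = (k:ℝ) := by
      have h5 : pvAux k ((k-1)+1) = 1 := by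
        rw [← hske]; simp [pvAux]
      rw [h5, mul_one, Nat.cast_sub hk]
      ring
    rw [hlast, Nat.sub_self]
    have h7 : H1 0 = 0 := by simp [H1]
    rw [h7]
    ring
  · intro n hn IH
    rw [Finset.sum_range_succ, IH]
    have hd0 : ((n+1-k:ℕ):ℝ) = ((n-k:ℕ):ℝ) + 1 := by
      have h8 : n+1-k = (n-k)+1 := by omega
      rw [h8]; push_cast; ring
    have hdval : ((n-k:ℕ):ℝ) = (n:ℝ) - k := by
      rw [Nat.cast_sub hn]
    have hlast : pvAux k (n+1) = 1/(((n-k:ℕ):ℝ)+1) := by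
      have h7 : ¬ (n+1 < k) := by omega
      have h8 : k < n+1 := by omega
      rw [pvAux, if_neg h7, if_pos h8, hd0]
    rw [hlast]
    have h9 : n+1-k = (n-k)+1 := by omega
    rw [h9]
    have h10 : H1 ((n-k)+1) = H1 (n-k) + 1/(((n-k:ℕ):ℝ)+1) := by
      simp [H1, Finset.sum_range_succ]
    rw [h10]
    have hpos : ((n-k:ℕ):ℝ) + 1 ≠ 0 := by positivity
    rw [hdval] at hpos ⊢
    push_cast
    field_simp
    ring

end AuxiliaryLemmas

/-- In the random permutation model on `{1,…,n}`: for every `1 ≤ k ≤ n`,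
the expectation of `\bar W_k(n) = Σ_{j=1}^n j·1_{B_{j,k}}` equals
`k(H^{(1)}_{k,n} − 1) + n + 1`, where `H^{(1)}_{k,n} = H^{(1)}_{k-1} + H^{(1)}_{n-k}`. -/
theorem expectation_barW (n k : ℕ) (hk1 : 1 ≤ k) (hk2 : k ≤ n) :
    expPerm (fun σ : Equiv.Perm (Fin n) => barW σ k)
      = (k : ℝ) * (H1 (k - 1) + H1 (n - k) - 1) + n + 1 := by
  rw [expPerm_barW_eq]
  have h1 : ∀ j : Fin n, (((j:ℕ):ℝ)+1) *
      probPerm (fun σ : Equiv.Perm (Fin n) => eventB σ ((j:ℕ)+1) k)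
      = (((j:ℕ):ℝ)+1) * pvAux k ((j:ℕ)+1) := by
    intro j
    rw [probPerm_eventB hk1 hk2 (by omega) (Nat.succ_le_of_lt j.isLt)]
  rw [Finset.sum_congr rfl fun j _ => h1 j]
  rw [Fin.sum_univ_eq_sum_range (fun j => (((j:ℕ):ℝ)+1) * pvAux k (j+1))]
  exact sum_main_aux k hk1 n hk2
end

section
/- In the random permutation model on {1,…,n}: for every 1 ≤ k ≤ n, the variance of \bar W_k(n) := Σ_{j=1}^n j·1_{B_{j,k}} equals k²(H^{(1)}_{k,n} − H^{(2)}_{k,n} − 3) + n²/2 + kn + 2k(H^{(1)}_{k−1} − H^{(1)}_{n−k}) − n/2 + k + 1. -/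
open Finset Filter Topology MeasureTheory

namespace VarBarW
open Equiv Finset

variable {n : ℕ}

/-- `a` comes strictly first among `F` in the order given by `σ.symm`. -/
def minEvt (a : Fin n) (F : Finset (Fin n)) (σ : Equiv.Perm (Fin n)) : Prop :=
  ∀ m ∈ F, m ≠ a → σ.symm a < σ.symm m

lemma minEvt_mul_iff {F : Finset (Fin n)} {a x : Fin n} (τ : Equiv.Perm (Fin n))
    (hτ : ∀ m, m ∈ F ↔ τ m ∈ F) (hax : τ a = x) (σ : Equiv.Perm (Fin n)) :
    minEvt x F (τ * σ) ↔ minEvt a F σ := by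
  have hsymm : ∀ m, (τ * σ).symm m = σ.symm (τ.symm m) := fun m => rfl
  constructor
  · intro h m hm hma
    have h1 : τ m ∈ F := (hτ m).1 hm
    have h2 : τ m ≠ x := by
      intro he; exact hma (τ.injective (he.trans hax.symm))
    have := h (τ m) h1 h2
    rwa [hsymm, hsymm, ← hax, Equiv.symm_apply_apply, Equiv.symm_apply_apply] at this
  · intro h m hm hmx
    have h1 : τ.symm m ∈ F := by
      rw [hτ (τ.symm m), Equiv.apply_symm_apply]; exact hm
    have h2 : τ.symm m ≠ a := by
      intro he
      apply hmx
      rw [← Equiv.apply_symm_apply τ m, he, hax]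
    have := h (τ.symm m) h1 h2
    rw [hsymm, hsymm, ← hax, Equiv.symm_apply_apply]
    exact this

lemma card_filter_perm_eq (τ : Equiv.Perm (Fin n)) (P Q : Equiv.Perm (Fin n) → Prop)
    [DecidablePred P] [DecidablePred Q] (h : ∀ σ, P σ ↔ Q (τ * σ)) :
    (univ.filter fun σ => P σ).card = (univ.filter fun σ => Q σ).card := by
  apply Finset.card_bij (fun σ _ => τ * σ)
  · intro σ hσ
    simp only [mem_filter, mem_univ, true_and] at hσ ⊢
    exact (h σ).1 hσ
  · intro a ha b hb hab
    exact mul_left_cancel hab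
  · intro σ' hσ'
    simp only [mem_filter, mem_univ, true_and] at hσ'
    refine ⟨τ⁻¹ * σ', by simp [mem_filter, (h (τ⁻¹ * σ')).2]; rw [(h (τ⁻¹ * σ'))]; simpa [mul_assoc] , by simp [mul_assoc]⟩

lemma swap_mem_iff {F : Finset (Fin n)} {b y : Fin n} (hb : b ∈ F) (hy : y ∈ F) (m : Fin n) :
    m ∈ F ↔ Equiv.swap b y m ∈ F := by
  rcases eq_or_ne m b with rfl | hmb
  · simp [Equiv.swap_apply_left, hb, hy]
  rcases eq_or_ne m y with rfl | hmy
  · simp [Equiv.swap_apply_right, hb, hy]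
  · rw [Equiv.swap_apply_of_ne_of_ne hmb hmy]

lemma swap_fix_iff {F : Finset (Fin n)} {b y : Fin n} (hb : b ∉ F) (hy : y ∉ F) (m : Fin n)
    (hm : m ∈ F) : Equiv.swap b y m = m := by
  apply Equiv.swap_apply_of_ne_of_ne
  · rintro rfl; exact hb hm
  · rintro rfl; exact hy hm


lemma swap_mem_iff' {F : Finset (Fin n)} {b y : Fin n} (hb : b ∉ F) (hy : y ∉ F) (m : Fin n) :
    m ∈ F ↔ Equiv.swap b y m ∈ F := by
  rcases eq_or_ne m b with rfl | hmb
  · simp [Equiv.swap_apply_left, hb, hy]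
  rcases eq_or_ne m y with rfl | hmy
  · simp [Equiv.swap_apply_right, hb, hy]
  · rw [Equiv.swap_apply_of_ne_of_ne hmb hmy]

open Classical in
lemma univ_eq_biUnion_minEvt (F : Finset (Fin n)) (hF : F.Nonempty) :
    (univ : Finset (Equiv.Perm (Fin n)))
      = F.biUnion (fun x => univ.filter fun σ => minEvt x F σ) := by
  ext σ
  simp only [mem_univ, true_iff, mem_biUnion, mem_filter, true_and]
  obtain ⟨x, hx, hmin⟩ := F.exists_min_image (fun m => σ.symm m) hF
  exact ⟨x, hx, fun m hm hmx =>
    lt_of_le_of_ne (hmin m hm) (fun he => hmx (σ.symm.injective he).symm)⟩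

open Classical in
lemma minEvt_disjoint (F : Finset (Fin n)) {x y : Fin n} (hxF : x ∈ F) (hyF : y ∈ F)
    (hxy : x ≠ y) :
    Disjoint (univ.filter fun σ => minEvt x F σ) (univ.filter fun σ => minEvt y F σ) := by
  rw [Finset.disjoint_left]
  intro σ hσx hσy
  simp only [mem_filter, mem_univ, true_and] at hσx hσy
  exact absurd (hσy x hxF hxy) (not_lt.2 (le_of_lt (hσx y hyF hxy.symm)))

open Classical in
lemma card_minEvt_const (F : Finset (Fin n)) {a x : Fin n} (ha : a ∈ F) (hx : x ∈ F) :
    (univ.filter fun σ => minEvt x F σ).card = (univ.filter fun σ => minEvt a F σ).card := by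
  apply card_filter_perm_eq (Equiv.swap x a)
  intro σ
  exact (minEvt_mul_iff (Equiv.swap x a) (swap_mem_iff hx ha) (Equiv.swap_apply_left x a) σ).symm

open Classical in
lemma card_minEvt_mul (F : Finset (Fin n)) {a : Fin n} (ha : a ∈ F) :
    (univ.filter fun σ => minEvt a F σ).card * F.card
      = Fintype.card (Equiv.Perm (Fin n)) := by
  have hcover := univ_eq_biUnion_minEvt F ⟨a, ha⟩
  have := Finset.card_biUnion (s := F)
    (t := fun x => univ.filter fun σ => minEvt x F σ)
    (fun x hx y hy hxy => minEvt_disjoint F hx hy hxy)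
  rw [← hcover] at this
  rw [Finset.card_univ] at this
  rw [this, Finset.sum_congr rfl (fun x hx => card_minEvt_const F ha hx),
    Finset.sum_const, smul_eq_mul, mul_comm]

open Classical in
lemma card_T_transport {F G : Finset (Fin n)} {a b x y : Fin n}
    (τ : Equiv.Perm (Fin n)) (hF : ∀ m, m ∈ F ↔ τ m ∈ F) (hG : ∀ m, m ∈ G ↔ τ m ∈ G)
    (hτa : τ a = x) (hτb : τ b = y) :
    (univ.filter fun σ => minEvt a F σ ∧ minEvt b G σ).card
      = (univ.filter fun σ => minEvt x F σ ∧ minEvt y G σ).card := by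
  apply card_filter_perm_eq τ
  intro σ
  rw [← minEvt_mul_iff τ hF hτa σ, ← minEvt_mul_iff τ hG hτb σ]

open Classical in
lemma pair_piece_disjoint {F G : Finset (Fin n)} {p q : Fin n × Fin n}
    (hp : p ∈ F ×ˢ G) (hq : q ∈ F ×ˢ G) (hpq : p ≠ q) :
    Disjoint (univ.filter fun σ => minEvt p.1 F σ ∧ minEvt p.2 G σ)
      (univ.filter fun σ => minEvt q.1 F σ ∧ minEvt q.2 G σ) := by
  simp only [Finset.mem_product] at hp hq
  rw [Finset.disjoint_left]
  intro σ hσp hσq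
  simp only [mem_filter, mem_univ, true_and] at hσp hσq
  rcases eq_or_ne p.1 q.1 with h1 | h1
  · have h2 : p.2 ≠ q.2 := fun h2 => hpq (Prod.ext h1 h2)
    exact absurd (hσq.2 p.2 hp.2 h2) (not_lt.2 (le_of_lt (hσp.2 q.2 hq.2 h2.symm)))
  · exact absurd (hσq.1 p.1 hp.1 h1) (not_lt.2 (le_of_lt (hσp.1 q.1 hq.1 h1.symm)))

open Classical in
lemma card_pair_disjoint {F G : Finset (Fin n)} (hd : Disjoint F G) {a b : Fin n}
    (ha : a ∈ F) (hb : b ∈ G) :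
    (univ.filter fun σ => minEvt a F σ ∧ minEvt b G σ).card * (F.card * G.card)
      = Fintype.card (Equiv.Perm (Fin n)) := by
  have haG : a ∉ G := fun h => (Finset.disjoint_left.1 hd ha) h
  have hbF : b ∉ F := fun h => (Finset.disjoint_left.1 hd h) hb
  -- cover
  have hcover : (univ : Finset (Equiv.Perm (Fin n)))
      = (F ×ˢ G).biUnion (fun p => univ.filter fun σ => minEvt p.1 F σ ∧ minEvt p.2 G σ) := by
    ext σ
    simp only [mem_univ, true_iff, mem_biUnion, mem_filter, true_and, Finset.mem_product]
    obtain ⟨x, hx, hminx⟩ := F.exists_min_image (fun m => σ.symm m) ⟨a, ha⟩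
    obtain ⟨y, hy, hminy⟩ := G.exists_min_image (fun m => σ.symm m) ⟨b, hb⟩
    exact ⟨(x, y), ⟨hx, hy⟩,
      fun m hm hmx => lt_of_le_of_ne (hminx m hm) (fun he => hmx (σ.symm.injective he).symm),
      fun m hm hmy => lt_of_le_of_ne (hminy m hm) (fun he => hmy (σ.symm.injective he).symm)⟩
  have hconst : ∀ p ∈ F ×ˢ G,
      (univ.filter fun σ => minEvt p.1 F σ ∧ minEvt p.2 G σ).card
        = (univ.filter fun σ => minEvt a F σ ∧ minEvt b G σ).card := by
    rintro ⟨x, y⟩ hp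
    simp only [Finset.mem_product] at hp
    have hxG : x ∉ G := fun h => (Finset.disjoint_left.1 hd hp.1) h
    have hyF : y ∉ F := fun h => (Finset.disjoint_left.1 hd h) hp.2
    refine (card_T_transport (Equiv.swap a x * Equiv.swap b y) ?_ ?_ ?_ ?_).symm
    · intro m
      calc m ∈ F ↔ Equiv.swap b y m ∈ F := swap_mem_iff' hbF hyF m
        _ ↔ Equiv.swap a x (Equiv.swap b y m) ∈ F := swap_mem_iff ha hp.1 _
        _ ↔ (Equiv.swap a x * Equiv.swap b y) m ∈ F := Iff.rfl
    · intro m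
      calc m ∈ G ↔ Equiv.swap b y m ∈ G := swap_mem_iff hb hp.2 m
        _ ↔ Equiv.swap a x (Equiv.swap b y m) ∈ G := swap_mem_iff' haG hxG _
        _ ↔ (Equiv.swap a x * Equiv.swap b y) m ∈ G := Iff.rfl
    · have hab : a ≠ b := by rintro rfl; exact hbF ha
      have hay : a ≠ y := by rintro rfl; exact hyF ha
      show Equiv.swap a x (Equiv.swap b y a) = x
      rw [show Equiv.swap b y a = a from Equiv.swap_apply_of_ne_of_ne hab hay,
        Equiv.swap_apply_left]
    · have hya : y ≠ a := by rintro rfl; exact haG hp.2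
      have hyx : y ≠ x := by rintro rfl; exact hxG hp.2
      show Equiv.swap a x (Equiv.swap b y b) = y
      rw [show Equiv.swap b y b = y from Equiv.swap_apply_left b y]
      exact Equiv.swap_apply_of_ne_of_ne hya hyx
  have hcard := Finset.card_biUnion
    (s := F ×ˢ G) (t := fun p => univ.filter fun σ => minEvt p.1 F σ ∧ minEvt p.2 G σ)
    (fun p hp q hq hpq => pair_piece_disjoint hp hq hpq)
  rw [← hcover, Finset.card_univ] at hcard
  rw [hcard, Finset.sum_congr rfl hconst, Finset.sum_const, smul_eq_mul,
    Finset.card_product, mul_comm]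
open Classical in
lemma card_pair_nested {F G : Finset (Fin n)} (hGF : G ⊆ F) {a b : Fin n}
    (haF : a ∈ F) (haG : a ∉ G) (hb : b ∈ G) :
    (univ.filter fun σ => minEvt a F σ ∧ minEvt b G σ).card * (F.card * G.card)
      = Fintype.card (Equiv.Perm (Fin n)) := by
  set c := (univ.filter fun σ => minEvt a F σ ∧ minEvt b G σ).card with hc
  set s := (univ.filter fun σ => minEvt a F σ).card with hsdef
  have hs : s * F.card = Fintype.card (Equiv.Perm (Fin n)) := card_minEvt_mul F haF
  have hTconst : ∀ x ∈ F \ G, ∀ y ∈ G,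
      (univ.filter fun σ => minEvt x F σ ∧ minEvt y G σ).card = c := by
    intro x hx y hy
    rw [Finset.mem_sdiff] at hx
    obtain ⟨hxF, hxG⟩ := hx
    refine (card_T_transport (Equiv.swap a x * Equiv.swap b y) ?_ ?_ ?_ ?_).symm
    · intro m
      calc m ∈ F ↔ Equiv.swap b y m ∈ F := swap_mem_iff (hGF hb) (hGF hy) m
        _ ↔ Equiv.swap a x (Equiv.swap b y m) ∈ F := swap_mem_iff haF hxF _
    · intro m
      calc m ∈ G ↔ Equiv.swap b y m ∈ G := swap_mem_iff hb hy m
        _ ↔ Equiv.swap a x (Equiv.swap b y m) ∈ G := swap_mem_iff' haG hxG _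
    · have hab : a ≠ b := by rintro rfl; exact haG hb
      have hay : a ≠ y := by rintro rfl; exact haG hy
      show Equiv.swap a x (Equiv.swap b y a) = x
      rw [show Equiv.swap b y a = a from Equiv.swap_apply_of_ne_of_ne hab hay,
        Equiv.swap_apply_left]
    · have hya : y ≠ a := by rintro rfl; exact haG hy
      have hyx : y ≠ x := by rintro rfl; exact hxG hy
      show Equiv.swap a x (Equiv.swap b y b) = y
      rw [show Equiv.swap b y b = y from Equiv.swap_apply_left b y]
      exact Equiv.swap_apply_of_ne_of_ne hya hyx
  have hSsplit : ∀ x ∈ F \ G, (univ.filter fun σ => minEvt x F σ).card = G.card * c := by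
    intro x hx
    have hxmem := hx
    rw [Finset.mem_sdiff] at hxmem
    have hcover : (univ.filter fun σ => minEvt x F σ)
        = G.biUnion (fun y => univ.filter fun σ => minEvt x F σ ∧ minEvt y G σ) := by
      ext σ
      simp only [mem_filter, mem_univ, true_and, mem_biUnion]
      constructor
      · intro hσ
        obtain ⟨y, hy, hminy⟩ := G.exists_min_image (fun m => σ.symm m) ⟨b, hb⟩
        exact ⟨y, hy, hσ, fun m hm hmy =>
          lt_of_le_of_ne (hminy m hm) (fun he => hmy (σ.symm.injective he).symm)⟩
      · rintro ⟨y, hy, h1, _⟩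
        exact h1
    rw [hcover, Finset.card_biUnion]
    · rw [Finset.sum_congr rfl (fun y hy => hTconst x hx y hy), Finset.sum_const, smul_eq_mul]
    · intro y hy y' hy' hne
      rw [Function.onFun, Finset.disjoint_left]
      intro σ hσ hσ'
      simp only [mem_filter, mem_univ, true_and] at hσ hσ'
      exact absurd (hσ'.2 y (hy) hne) (not_lt.2 (le_of_lt (hσ.2 y' hy' hne.symm)))
  -- global partition
  have hglob : Fintype.card (Equiv.Perm (Fin n)) = ∑ x ∈ F,
      (univ.filter fun σ => minEvt x F σ).card := by
    have hcover := univ_eq_biUnion_minEvt F ⟨a, haF⟩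
    have := Finset.card_biUnion (s := F)
      (t := fun x => univ.filter fun σ => minEvt x F σ)
      (fun x hx y hy hxy => minEvt_disjoint F hx hy hxy)
    rw [← hcover, Finset.card_univ] at this
    exact this
  have hsum : Fintype.card (Equiv.Perm (Fin n))
      = (F.card - G.card) * (G.card * c) + G.card * s := by
    rw [hglob, ← Finset.sum_sdiff hGF]
    rw [Finset.sum_congr rfl hSsplit, Finset.sum_const, smul_eq_mul, Finset.card_sdiff_of_subset hGF]
    congr 1
    rw [Finset.sum_congr rfl (fun x hx => card_minEvt_const F haF (hGF hx)), Finset.sum_const,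
      smul_eq_mul]
  -- arithmetic over ℝ
  have hGcle : G.card ≤ F.card := Finset.card_le_card hGF
  have hdpos : G.card < F.card := by
    have : (F \ G).Nonempty := ⟨a, Finset.mem_sdiff.2 ⟨haF, haG⟩⟩
    have h1 := Finset.card_pos.2 this
    rw [Finset.card_sdiff_of_subset hGF] at h1
    omega
  have hR : ((c * (F.card * G.card) : ℕ) : ℝ)
      = ((Fintype.card (Equiv.Perm (Fin n)) : ℕ) : ℝ) := by
    have e1 : ((Fintype.card (Equiv.Perm (Fin n)) : ℕ) : ℝ)
        = ((F.card : ℝ) - G.card) * ((G.card : ℝ) * c) + (G.card : ℝ) * s := by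
      rw [hsum]; push_cast [Nat.cast_sub hGcle]; ring
    have e2 : (s : ℝ) * F.card = ((Fintype.card (Equiv.Perm (Fin n)) : ℕ) : ℝ) := by
      exact_mod_cast congrArg (Nat.cast : ℕ → ℝ) hs
    have hne : (F.card : ℝ) - G.card ≠ 0 := by
      have : (G.card : ℝ) < F.card := by exact_mod_cast hdpos
      linarith
    push_cast
    apply mul_left_cancel₀ hne
    linear_combination (-(F.card : ℝ)) * e1 - (G.card : ℝ) * e2
  exact_mod_cast hR
/-- the relevant interval of keys (as indices in `Fin n`) for the event `B_{u,k}`, `u ≠ k`. -/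
def intv (k u : ℕ) : Finset (Fin n) :=
  univ.filter (fun m : Fin n =>
    (if u < k then u else k + 1) ≤ (m : ℕ) + 1 ∧ (m : ℕ) + 1 ≤ (if u < k then k - 1 else u))

lemma mem_intv {k u : ℕ} {m : Fin n} :
    m ∈ (intv k u : Finset (Fin n)) ↔
      (if u < k then u else k + 1) ≤ (m : ℕ) + 1 ∧ (m : ℕ) + 1 ≤ (if u < k then k - 1 else u) := by
  simp [intv]

lemma card_filter_interval (lo hi : ℕ) (hlo : 1 ≤ lo) (hhi : hi ≤ n) (hn : 0 < n) :
    (univ.filter (fun m : Fin n => lo ≤ (m : ℕ) + 1 ∧ (m : ℕ) + 1 ≤ hi)).card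
      = hi + 1 - lo := by
  rw [← Nat.card_Icc lo hi]
  apply Finset.card_nbij' (fun (m : Fin n) => (m : ℕ) + 1)
    (fun (u : ℕ) => (⟨(u - 1) % n, Nat.mod_lt _ hn⟩ : Fin n))
  · intro m hm
    simp only [Finset.mem_coe, mem_filter, mem_univ, true_and] at hm
    rw [Finset.mem_coe, Finset.mem_Icc]
    exact hm
  · intro u hu
    rw [Finset.mem_coe, Finset.mem_Icc] at hu
    have h1 : u - 1 < n := by omega
    simp only [Finset.mem_coe, mem_filter, mem_univ, true_and, Nat.mod_eq_of_lt h1]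
    omega
  · intro m hm
    apply Fin.ext
    simp [Nat.mod_eq_of_lt m.isLt]
  · intro u hu
    rw [Finset.mem_coe, Finset.mem_Icc] at hu
    have h1 : u - 1 < n := by omega
    simp [Nat.mod_eq_of_lt h1]
    omega

/-- size of the interval -/
def dd (k u : ℕ) : ℕ := if u < k then k - u else u - k

lemma card_intv {k u : ℕ} (hk1 : 1 ≤ k) (hkn : k ≤ n) (hu1 : 1 ≤ u) (hun : u ≤ n)
    (hne : u ≠ k) : (intv k u : Finset (Fin n)).card = dd k u := by
  unfold intv dd
  rcases lt_or_gt_of_ne hne with h | h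
  · simp only [if_pos h]
    rw [card_filter_interval u (k-1) hu1 (by omega) (by omega)]
    omega
  · simp only [if_neg (by omega : ¬ u < k)]
    rw [card_filter_interval (k+1) u (by omega) hun (by omega)]
    omega

lemma mem_intv_self {k : ℕ} (hk1 : 1 ≤ k) (j : Fin n) (hne : (j : ℕ) + 1 ≠ k) :
    j ∈ (intv k ((j : ℕ) + 1) : Finset (Fin n)) := by
  rw [mem_intv]
  rcases lt_or_gt_of_ne hne with h | h
  · rw [if_pos h, if_pos h]; omega
  · rw [if_neg (by omega), if_neg (by omega)]; omega

lemma eventB_iff_minEvt {k : ℕ} (hk1 : 1 ≤ k) (j : Fin n)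
    (hne : (j : ℕ) + 1 ≠ k) (σ : Equiv.Perm (Fin n)) :
    eventB σ ((j : ℕ) + 1) k ↔ minEvt j (intv k ((j : ℕ) + 1)) σ := by
  set u := (j : ℕ) + 1 with hu
  rcases lt_or_gt_of_ne hne with h | h
  · -- u < k, event A σ u (k-1), interval [u, k-1]
    have hmin : min u (k - 1) = u := by omega
    have hmax : max u (k - 1) = k - 1 := by omega
    rw [eventB, if_pos h, eventA]
    constructor
    · intro hA m hm hmj
      rw [mem_intv, if_pos h, if_pos h] at hm
      exact hA j m rfl (by rw [hmin]; exact hm.1) (by rw [hmax]; exact hm.2)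
        (by intro he; exact hmj (Fin.ext (by omega)))
    · intro hB jf mf h1 h2 h3 h4
      have hjf : jf = j := Fin.ext (by omega)
      rw [hmin] at h2; rw [hmax] at h3
      rw [hjf]
      exact hB mf (by rw [mem_intv, if_pos h, if_pos h]; exact ⟨h2, h3⟩)
        (by intro he; exact h4 (by rw [he]))
  · -- k < u, event A σ u (k+1), interval [k+1, u]
    have hmin : min u (k + 1) = k + 1 := by omega
    have hmax : max u (k + 1) = u := by omega
    rw [eventB, if_neg (by omega), if_pos h, eventA]
    constructor
    · intro hA m hm hmj
      rw [mem_intv, if_neg (by omega), if_neg (by omega)] at hm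
      exact hA j m rfl (by rw [hmin]; exact hm.1) (by rw [hmax]; exact hm.2)
        (by intro he; exact hmj (Fin.ext (by omega)))
    · intro hB jf mf h1 h2 h3 h4
      have hjf : jf = j := Fin.ext (by omega)
      rw [hmin] at h2; rw [hmax] at h3
      rw [hjf]
      exact hB mf (by rw [mem_intv, if_neg (by omega), if_neg (by omega)]; exact ⟨h2, h3⟩)
        (by intro he; exact h4 (by rw [he]))

lemma eventB_self {k : ℕ} (σ : Equiv.Perm (Fin n)) (h : k ≠ 0) : eventB σ k k := by
  rw [eventB, if_neg (lt_irrefl k), if_neg (lt_irrefl k)]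
  trivial

lemma eventB_self_iff {k : ℕ} (σ : Equiv.Perm (Fin n)) : eventB σ k k ↔ True := by
  rw [eventB, if_neg (lt_irrefl k), if_neg (lt_irrefl k)]
open Classical in
lemma probPerm_congr {E E' : Equiv.Perm (Fin n) → Prop} (h : ∀ σ, E σ ↔ E' σ) :
    probPerm E = probPerm E' := by
  have hfe : (Finset.univ.filter fun σ => E σ) = (Finset.univ.filter fun σ => E' σ) :=
    Finset.filter_congr (fun σ _ => h σ)
  unfold probPerm
  rw [hfe]

lemma permCard_ne_zero : ((Fintype.card (Equiv.Perm (Fin n)) : ℝ)) ≠ 0 := by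
  exact_mod_cast Fintype.card_ne_zero

lemma probPerm_true : probPerm (fun _ : Equiv.Perm (Fin n) => True) = 1 := by
  unfold probPerm
  rw [Finset.filter_true, Finset.card_univ, div_self permCard_ne_zero]

lemma card_filter_eq_card_filter (p : Equiv.Perm (Fin n) → Prop) (i1 i2 : DecidablePred p) :
    (@Finset.filter _ p i1 Finset.univ).card = (@Finset.filter _ p i2 Finset.univ).card := by
  rw [Subsingleton.elim i1 i2]

open Classical in
lemma probPerm_div (E : Equiv.Perm (Fin n) → Prop) (inst : DecidablePred E) (d : ℕ) (hd : d ≠ 0)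
    (h : (@Finset.filter _ E inst Finset.univ).card * d = Fintype.card (Equiv.Perm (Fin n))) :
    probPerm E = 1 / (d : ℝ) := by
  unfold probPerm
  rw [card_filter_eq_card_filter E _ inst]
  have hcast : ((@Finset.filter _ E inst Finset.univ).card : ℝ) * d
      = (Fintype.card (Equiv.Perm (Fin n)) : ℝ) := by exact_mod_cast h
  have hd' : (d : ℝ) ≠ 0 := Nat.cast_ne_zero.2 hd
  field_simp
  linarith [hcast]

/-- the individual probability `P(B_{u,k})`. -/
noncomputable def pB (k u : ℕ) : ℝ := if u = k then 1 else 1 / (dd k u : ℝ)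

lemma dd_ne_zero {k u : ℕ} (hne : u ≠ k) : dd k u ≠ 0 := by
  unfold dd; split <;> omega

open Classical in
lemma prob_single {k : ℕ} (hk1 : 1 ≤ k) (hkn : k ≤ n) (j : Fin n) :
    probPerm (fun σ : Equiv.Perm (Fin n) => eventB σ ((j : ℕ) + 1) k)
      = pB k ((j : ℕ) + 1) := by
  by_cases h : (j : ℕ) + 1 = k
  · rw [pB, if_pos h]
    rw [probPerm_congr (E' := fun _ => True) (fun σ => by rw [h]; exact eventB_self_iff σ)]
    exact probPerm_true
  · rw [pB, if_neg h]
    apply probPerm_div (n := n) (fun σ => eventB σ ((j : ℕ) + 1) k) _ _ (dd_ne_zero h)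
    have h1 : (Finset.univ.filter fun σ => eventB σ ((j : ℕ) + 1) k)
        = (Finset.univ.filter fun σ => minEvt j (intv k ((j : ℕ) + 1)) σ) :=
      Finset.filter_congr (fun σ _ => eventB_iff_minEvt hk1 j h σ)
    rw [h1, ← card_intv hk1 hkn (by omega) (by omega : (j : ℕ) + 1 ≤ n) h]
    exact card_minEvt_mul _ (mem_intv_self hk1 j h)

lemma intv_subset_lt {k u v : ℕ} (h1 : u ≤ v) (h2 : v < k) :
    (intv k v : Finset (Fin n)) ⊆ intv k u := by
  intro m hm
  rw [mem_intv] at hm ⊢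
  rw [if_pos h2, if_pos h2] at hm
  rw [if_pos (by omega : u < k), if_pos (by omega : u < k)]
  omega

lemma intv_subset_gt {k u v : ℕ} (h1 : k < u) (h2 : u ≤ v) :
    (intv k u : Finset (Fin n)) ⊆ intv k v := by
  intro m hm
  rw [mem_intv] at hm ⊢
  rw [if_neg (by omega), if_neg (by omega)] at hm
  rw [if_neg (by omega : ¬ v < k), if_neg (by omega : ¬ v < k)]
  omega

lemma not_mem_intv_lt {k u v : ℕ} (j : Fin n) (hj : (j : ℕ) + 1 = u) (huv : u < v)
    (hvk : v < k) : j ∉ (intv k v : Finset (Fin n)) := by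
  rw [mem_intv, if_pos hvk, if_pos hvk]
  omega

lemma not_mem_intv_gt {k u v : ℕ} (l : Fin n) (hl : (l : ℕ) + 1 = v) (hku : k < u)
    (huv : u < v) : l ∉ (intv k u : Finset (Fin n)) := by
  rw [mem_intv, if_neg (by omega), if_neg (by omega)]
  omega

lemma intv_disjoint {k u v : ℕ} (hu : u < k) (hv : k < v) :
    Disjoint (intv k u : Finset (Fin n)) (intv k v) := by
  rw [Finset.disjoint_left]
  intro m hm1 hm2
  rw [mem_intv, if_pos hu, if_pos hu] at hm1
  rw [mem_intv, if_neg (by omega), if_neg (by omega)] at hm2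
  omega
open Classical in
lemma prob_pair {k : ℕ} (hk1 : 1 ≤ k) (hkn : k ≤ n) (j l : Fin n) (hjl : j ≠ l) :
    probPerm (fun σ : Equiv.Perm (Fin n) =>
        eventB σ ((j : ℕ) + 1) k ∧ eventB σ ((l : ℕ) + 1) k)
      = pB k ((j : ℕ) + 1) * pB k ((l : ℕ) + 1) := by
  by_cases hu : (j : ℕ) + 1 = k
  · rw [probPerm_congr (E' := fun σ => eventB σ ((l : ℕ) + 1) k)
      (fun σ => ⟨fun h => h.2, fun h => ⟨by rw [hu]; exact eventB_self σ (by omega), h⟩⟩)]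
    rw [prob_single hk1 hkn l]
    unfold pB
    rw [if_pos hu, one_mul]
  by_cases hv : (l : ℕ) + 1 = k
  · rw [probPerm_congr (E' := fun σ => eventB σ ((j : ℕ) + 1) k)
      (fun σ => ⟨fun h => h.1, fun h => ⟨h, by rw [hv]; exact eventB_self σ (by omega)⟩⟩)]
    rw [prob_single hk1 hkn j]
    unfold pB
    rw [if_pos hv, mul_one]
  have huv : (j : ℕ) + 1 ≠ (l : ℕ) + 1 := fun h => hjl (Fin.ext (by omega))
  rw [pB, pB, if_neg hu, if_neg hv, div_mul_div_comm, one_mul]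
  have hcast : ((dd k ((j : ℕ) + 1) : ℝ)) * (dd k ((l : ℕ) + 1))
      = ((dd k ((j : ℕ) + 1) * dd k ((l : ℕ) + 1) : ℕ) : ℝ) := by push_cast; ring
  rw [hcast]
  apply probPerm_div (n := n) _ _ _ (Nat.mul_ne_zero (dd_ne_zero hu) (dd_ne_zero hv))
  have hfe : (Finset.univ.filter fun σ : Equiv.Perm (Fin n) =>
        eventB σ ((j : ℕ) + 1) k ∧ eventB σ ((l : ℕ) + 1) k)
      = (Finset.univ.filter fun σ =>
          minEvt j (intv k ((j : ℕ) + 1)) σ ∧ minEvt l (intv k ((l : ℕ) + 1)) σ) :=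
    Finset.filter_congr (fun σ _ =>
      and_congr (eventB_iff_minEvt hk1 j hu σ) (eventB_iff_minEvt hk1 l hv σ))
  rw [hfe, ← card_intv hk1 hkn (by omega) (by omega : (j : ℕ) + 1 ≤ n) hu,
    ← card_intv hk1 hkn (by omega) (by omega : (l : ℕ) + 1 ≤ n) hv]
  have hcomm : (Finset.univ.filter fun σ : Equiv.Perm (Fin n) =>
        minEvt j (intv k ((j : ℕ) + 1)) σ ∧ minEvt l (intv k ((l : ℕ) + 1)) σ)
      = (Finset.univ.filter fun σ =>
          minEvt l (intv k ((l : ℕ) + 1)) σ ∧ minEvt j (intv k ((j : ℕ) + 1)) σ) :=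
    Finset.filter_congr (fun σ _ => and_comm)
  rcases lt_or_gt_of_ne hu with h1u | h1u <;> rcases lt_or_gt_of_ne hv with h1v | h1v
  · -- both < k
    rcases lt_or_gt_of_ne huv with h2 | h2
    · exact card_pair_nested (intv_subset_lt (le_of_lt h2) h1v)
        (mem_intv_self hk1 j hu) (not_mem_intv_lt j rfl h2 h1v) (mem_intv_self hk1 l hv)
    · rw [hcomm, mul_comm ((intv k ((j : ℕ) + 1) : Finset (Fin n)).card)]
      exact card_pair_nested (intv_subset_lt (le_of_lt h2) h1u)
        (mem_intv_self hk1 l hv) (not_mem_intv_lt l rfl h2 h1u) (mem_intv_self hk1 j hu)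
  · -- j < k < l
    exact card_pair_disjoint (intv_disjoint h1u h1v)
      (mem_intv_self hk1 j hu) (mem_intv_self hk1 l hv)
  · -- l < k < j
    rw [hcomm, mul_comm ((intv k ((j : ℕ) + 1) : Finset (Fin n)).card)]
    exact card_pair_disjoint (intv_disjoint h1v h1u)
      (mem_intv_self hk1 l hv) (mem_intv_self hk1 j hu)
  · -- both > k
    rcases lt_or_gt_of_ne huv with h2 | h2
    · rw [hcomm, mul_comm ((intv k ((j : ℕ) + 1) : Finset (Fin n)).card)]
      exact card_pair_nested (intv_subset_gt h1u (le_of_lt h2))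
        (mem_intv_self hk1 l hv) (not_mem_intv_gt l rfl h1u h2) (mem_intv_self hk1 j hu)
    · exact card_pair_nested (intv_subset_gt h1v (le_of_lt h2))
        (mem_intv_self hk1 j hu) (not_mem_intv_gt j rfl h1v h2) (mem_intv_self hk1 l hv)
lemma expPerm_congr {f g : Equiv.Perm (Fin n) → ℝ} (h : ∀ σ, f σ = g σ) :
    expPerm f = expPerm g := congrArg expPerm (funext h)

lemma expPerm_sum {ι : Type*} (s : Finset ι) (f : ι → Equiv.Perm (Fin n) → ℝ) :
    expPerm (fun σ => ∑ j ∈ s, f j σ) = ∑ j ∈ s, expPerm (fun σ => f j σ) := by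
  unfold expPerm
  rw [Finset.sum_comm, Finset.sum_div]

lemma expPerm_const_mul (c : ℝ) (f : Equiv.Perm (Fin n) → ℝ) :
    expPerm (fun σ => c * f σ) = c * expPerm f := by
  unfold expPerm
  rw [← Finset.mul_sum, mul_div_assoc]

open Classical in
lemma expPerm_ind (E : Equiv.Perm (Fin n) → Prop) :
    expPerm (fun σ => ind (E σ)) = probPerm E := by
  unfold expPerm probPerm ind
  congr 1
  rw [Finset.sum_boole]

lemma varPerm_eq (X : Equiv.Perm (Fin n) → ℝ) :
    varPerm X = expPerm (fun σ => X σ ^ 2) - expPerm X ^ 2 := by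
  have hN : ((Fintype.card (Equiv.Perm (Fin n)) : ℝ)) ≠ 0 := permCard_ne_zero
  unfold varPerm expPerm
  set N := ((Fintype.card (Equiv.Perm (Fin n)) : ℝ)) with hNdef
  set S1 := ∑ σ : Equiv.Perm (Fin n), X σ with hS1
  have key : ∑ σ : Equiv.Perm (Fin n), (X σ - S1 / N) ^ 2
      = (∑ σ : Equiv.Perm (Fin n), X σ ^ 2) - 2 * (S1 / N) * S1
        + (Fintype.card (Equiv.Perm (Fin n)) : ℝ) * (S1 / N) ^ 2 := by
    rw [Finset.sum_congr rfl
      (fun σ _ => (by ring : (X σ - S1 / N) ^ 2 = X σ ^ 2 - 2 * (S1 / N) * X σ + (S1 / N) ^ 2))]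
    rw [Finset.sum_add_distrib, Finset.sum_sub_distrib, ← Finset.mul_sum, Finset.sum_const,
      Finset.card_univ, nsmul_eq_mul]
  rw [key]
  field_simp
  ring
lemma ind_mul_ind (P Q : Prop) : ind P * ind Q = ind (P ∧ Q) := by
  unfold ind
  by_cases hP : P <;> by_cases hQ : Q <;> simp [hP, hQ]

open Classical in
lemma varPerm_barW_diag {k : ℕ} (hk1 : 1 ≤ k) (hkn : k ≤ n) :
    varPerm (fun σ : Equiv.Perm (Fin n) => barW σ k)
      = ∑ j : Fin n, (((j : ℕ) + 1 : ℝ)) ^ 2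
          * (pB k ((j : ℕ) + 1) - pB k ((j : ℕ) + 1) ^ 2) := by
  rw [varPerm_eq]
  have hEX : expPerm (fun σ : Equiv.Perm (Fin n) => barW σ k)
      = ∑ j : Fin n, (((j : ℕ) + 1 : ℝ)) * pB k ((j : ℕ) + 1) := by
    rw [show (fun σ : Equiv.Perm (Fin n) => barW σ k)
        = fun σ => ∑ j : Fin n, (((j : ℕ) + 1 : ℝ)) * ind (eventB σ ((j : ℕ) + 1) k) from rfl]
    rw [expPerm_sum]
    exact Finset.sum_congr rfl (fun j _ => by
      rw [expPerm_const_mul, expPerm_ind, prob_single hk1 hkn j])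
  have hEX2 : expPerm (fun σ : Equiv.Perm (Fin n) => barW σ k ^ 2)
      = ∑ j : Fin n, ∑ l : Fin n, ((((j : ℕ) + 1 : ℝ)) * (((l : ℕ) + 1 : ℝ)))
          * probPerm (fun σ : Equiv.Perm (Fin n) =>
              eventB σ ((j : ℕ) + 1) k ∧ eventB σ ((l : ℕ) + 1) k) := by
    have h1 : ∀ σ : Equiv.Perm (Fin n), barW σ k ^ 2
        = ∑ j : Fin n, ∑ l : Fin n, ((((j : ℕ) + 1 : ℝ)) * (((l : ℕ) + 1 : ℝ)))
            * ind (eventB σ ((j : ℕ) + 1) k ∧ eventB σ ((l : ℕ) + 1) k) := by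
      intro σ
      rw [barW, sq, Finset.sum_mul_sum]
      exact Finset.sum_congr rfl (fun j _ => Finset.sum_congr rfl (fun l _ => by
        rw [← ind_mul_ind]; ring))
    rw [expPerm_congr h1, expPerm_sum]
    refine Finset.sum_congr rfl (fun j _ => ?_)
    rw [expPerm_sum]
    refine Finset.sum_congr rfl (fun l _ => ?_)
    rw [expPerm_const_mul, expPerm_ind]
  rw [hEX, hEX2]
  have hsq : (∑ j : Fin n, (((j : ℕ) + 1 : ℝ)) * pB k ((j : ℕ) + 1)) ^ 2
      = ∑ j : Fin n, ∑ l : Fin n,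
          ((((j : ℕ) + 1 : ℝ)) * pB k ((j : ℕ) + 1))
            * ((((l : ℕ) + 1 : ℝ)) * pB k ((l : ℕ) + 1)) := by
    rw [sq, Finset.sum_mul_sum]
  rw [hsq, ← Finset.sum_sub_distrib]
  refine Finset.sum_congr rfl (fun j _ => ?_)
  rw [← Finset.sum_sub_distrib]
  rw [Finset.sum_eq_single j]
  · rw [probPerm_congr (E' := fun σ : Equiv.Perm (Fin n) => eventB σ ((j : ℕ) + 1) k)
      (fun σ => and_self_iff), prob_single hk1 hkn j]
    ring
  · intro l _ hne
    rw [prob_pair hk1 hkn j l (Ne.symm hne)]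
    ring
  · intro h
    exact absurd (Finset.mem_univ j) h
lemma H1_succ (m : ℕ) : H1 (m + 1) = H1 m + 1 / ((m : ℝ) + 1) := by
  rw [H1, H1, Finset.sum_range_succ]

lemma H2_succ (m : ℕ) : H2 (m + 1) = H2 m + 1 / ((m : ℝ) + 1) ^ 2 := by
  rw [H2, H2, Finset.sum_range_succ]

lemma sum_shape (x : ℝ) (m : ℕ) :
    ∑ i ∈ Finset.range m, (x + ((i : ℝ) + 1)) ^ 2 * (1 / ((i : ℝ) + 1) - (1 / ((i : ℝ) + 1)) ^ 2)
      = x ^ 2 * (H1 m - H2 m) + 2 * x * ((m : ℝ) - H1 m) + (m : ℝ) * ((m : ℝ) - 1) / 2 := by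
  induction m with
  | zero => simp [H1, H2]
  | succ m ih =>
    rw [Finset.sum_range_succ, ih, H1_succ, H2_succ]
    have hm : ((m : ℝ) + 1) ≠ 0 := by positivity
    push_cast
    field_simp
    ring

open Classical in
lemma main_sum {k : ℕ} (hk1 : 1 ≤ k) (hk2 : k ≤ n) :
    ∑ u ∈ Finset.range n, ((u : ℝ) + 1) ^ 2 * (pB k (u + 1) - pB k (u + 1) ^ 2)
      = (k : ℝ) ^ 2 * ((H1 (k - 1) + H1 (n - k)) - (H2 (k - 1) + H2 (n - k)) - 3)
        + (n : ℝ) ^ 2 / 2 + (k : ℝ) * n + 2 * (k : ℝ) * (H1 (k - 1) - H1 (n - k))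
        - (n : ℝ) / 2 + k + 1 := by
  have hsplit : Finset.range n = Finset.range (k + (n - k)) := by congr 1; omega
  rw [hsplit, Finset.sum_range_add]
  have hk' : Finset.range k = Finset.range ((k - 1) + 1) := by congr 1; omega
  rw [hk', Finset.sum_range_succ]
  -- middle term is zero
  have hmid : (((k - 1 : ℕ) : ℝ) + 1) ^ 2 * (pB k ((k - 1) + 1) - pB k ((k - 1) + 1) ^ 2)
      = 0 := by
    rw [show (k - 1) + 1 = k from by omega, pB, if_pos rfl]
    ring
  rw [hmid, add_zero]
  -- low part
  have hlow : ∑ u ∈ Finset.range (k - 1), ((u : ℝ) + 1) ^ 2 * (pB k (u + 1) - pB k (u + 1) ^ 2)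
      = ∑ i ∈ Finset.range (k - 1), (-(k : ℝ) + ((i : ℝ) + 1)) ^ 2
          * (1 / ((i : ℝ) + 1) - (1 / ((i : ℝ) + 1)) ^ 2) := by
    rw [← Finset.sum_range_reflect]
    refine Finset.sum_congr rfl (fun i hi => ?_)
    rw [Finset.mem_range] at hi
    have h2 : i + 2 ≤ k := by omega
    have e3 : pB k ((k - 1 - 1 - i) + 1) = 1 / ((i : ℝ) + 1) := by
      rw [pB, if_neg (by omega), dd, if_pos (by omega),
        show k - ((k - 1 - 1 - i) + 1) = i + 1 from by omega]
      push_cast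
      ring
    rw [e3, show ((k - 1 - 1 - i : ℕ) : ℝ) = (k : ℝ) - (i : ℝ) - 2 from by
      rw [show k - 1 - 1 - i = k - (i + 2) from by omega, Nat.cast_sub h2]; push_cast; ring]
    ring
  -- high part
  have hhigh : ∑ i ∈ Finset.range (n - k), (((k + i : ℕ) : ℝ) + 1) ^ 2
        * (pB k ((k + i) + 1) - pB k ((k + i) + 1) ^ 2)
      = ∑ i ∈ Finset.range (n - k), ((k : ℝ) + ((i : ℝ) + 1)) ^ 2
          * (1 / ((i : ℝ) + 1) - (1 / ((i : ℝ) + 1)) ^ 2) := by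
    refine Finset.sum_congr rfl (fun i hi => ?_)
    have e3 : pB k ((k + i) + 1) = 1 / ((i : ℝ) + 1) := by
      rw [pB, if_neg (by omega), dd, if_neg (by omega),
        show (k + i) + 1 - k = i + 1 from by omega]
      push_cast
      ring
    rw [e3]
    push_cast
    ring
  rw [hlow, hhigh, sum_shape, sum_shape]
  have ha : ((k - 1 : ℕ) : ℝ) = (k : ℝ) - 1 := by
    rw [Nat.cast_sub hk1]; push_cast; ring
  have hb : ((n - k : ℕ) : ℝ) = (n : ℝ) - k := by
    rw [Nat.cast_sub hk2]
  rw [ha, hb]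
  ring
end VarBarW

/-- In the random permutation model on `{1,…,n}`: for every `1 ≤ k ≤ n`,
the variance of `\bar W_k(n) = Σ_{j=1}^n j·1_{B_{j,k}}` equals
`k²(H^{(1)}_{k,n} − H^{(2)}_{k,n} − 3) + n²/2 + kn + 2k(H^{(1)}_{k−1} − H^{(1)}_{n−k}) − n/2 + k + 1`. -/
theorem variance_barW (n k : ℕ) (hk1 : 1 ≤ k) (hk2 : k ≤ n) :
    varPerm (fun σ : Equiv.Perm (Fin n) => barW σ k)
      = (k : ℝ) ^ 2 * ((H1 (k - 1) + H1 (n - k)) - (H2 (k - 1) + H2 (n - k)) - 3)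
        + (n : ℝ) ^ 2 / 2 + (k : ℝ) * n + 2 * (k : ℝ) * (H1 (k - 1) - H1 (n - k))
        - (n : ℝ) / 2 + k + 1 := by
  rw [VarBarW.varPerm_barW_diag hk1 hk2]
  rw [Fin.sum_univ_eq_sum_range
    (fun u => ((u : ℝ) + 1) ^ 2 * (VarBarW.pB k (u + 1) - VarBarW.pB k (u + 1) ^ 2)) n]
  exact VarBarW.main_sum hk1 hk2
end

section
/- In the random permutation model on {1,…,n}: for every 1 ≤ k ≤ n, E[|k·D_k(n) − W_k(n)|] ≤ k + n. -/
open Finset Filter Topology MeasureTheory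

open Classical in
lemma key {n : ℕ} (jf : Fin n) (k : ℕ) (hk1 : 1 ≤ k) (hk2 : k ≤ n) :
    |(k : ℝ) - ((jf:ℕ)+1)| *
      ((Finset.univ.filter fun σ : Equiv.Perm (Fin n) => eventA σ ((jf:ℕ)+1) k).card : ℝ)
      ≤ (Fintype.card (Equiv.Perm (Fin n)) : ℝ) := by
  classical
  set j : ℕ := (jf:ℕ)+1 with hj
  have hj1 : 1 ≤ j := Nat.le_add_left 1 _
  have hjn : j ≤ n := jf.isLt
  have hmaxn : max j k ≤ n := max_le hjn hk2
  have hmin1 : 1 ≤ min j k := le_min hj1 hk1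
  set S : Finset (Fin n) :=
    Finset.univ.filter (fun m : Fin n => min j k ≤ (m:ℕ)+1 ∧ (m:ℕ)+1 ≤ max j k) with hS
  set F : Fin n → Finset (Equiv.Perm (Fin n)) :=
    fun a => Finset.univ.filter (fun σ => ∀ m ∈ S, m ≠ a → σ.symm a < σ.symm m) with hF
  have hjfS : jf ∈ S := by
    simp only [hS, mem_filter, mem_univ, true_and]
    exact ⟨min_le_left _ _, le_max_left _ _⟩
  -- Step A : the event set is F jf
  have hA : (Finset.univ.filter fun σ : Equiv.Perm (Fin n) => eventA σ j k) = F jf := by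
    ext σ
    simp only [hF, mem_filter, mem_univ, true_and]
    constructor
    · intro h m hm hne
      simp only [hS, mem_filter, mem_univ, true_and] at hm
      refine h jf m rfl hm.1 hm.2 ?_
      intro hc
      exact hne (Fin.ext (Nat.succ_injective hc))
    · intro h jf' mf he h1 h2 h3
      have : jf' = jf := Fin.ext (Nat.succ_injective he)
      subst this
      refine h mf ?_ ?_
      · simp only [hS, mem_filter, mem_univ, true_and]; exact ⟨h1, h2⟩
      · intro hc; exact h3 (by rw [hc])
  -- Step B : all classes have equal cardinality
  have hB : ∀ a ∈ S, (F a).card = (F jf).card := by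
    intro a haS
    refine Finset.card_bij' (fun σ _ => σ.trans (Equiv.swap jf a))
      (fun σ _ => σ.trans (Equiv.swap jf a)) ?_ ?_ ?_ ?_
    · -- F a → F jf
      intro σ hσ
      simp only [hF, mem_filter, mem_univ, true_and] at hσ ⊢
      intro m hm hmne
      have hsymm : ∀ x, (σ.trans (Equiv.swap jf a)).symm x = σ.symm (Equiv.swap jf a x) := by
        intro x; simp [Equiv.symm_trans_apply]
      rw [hsymm, hsymm, Equiv.swap_apply_left]
      by_cases hma : m = a
      · subst hma
        rw [Equiv.swap_apply_right]
        exact hσ jf hjfS (fun hc => hmne hc.symm)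
      · rw [Equiv.swap_apply_of_ne_of_ne hmne hma]
        exact hσ m hm hma
    · -- F jf → F a
      intro σ hσ
      simp only [hF, mem_filter, mem_univ, true_and] at hσ ⊢
      intro m hm hmne
      have hsymm : ∀ x, (σ.trans (Equiv.swap jf a)).symm x = σ.symm (Equiv.swap jf a x) := by
        intro x; simp [Equiv.symm_trans_apply]
      rw [hsymm, hsymm, Equiv.swap_apply_right]
      by_cases hmj : m = jf
      · subst hmj
        rw [Equiv.swap_apply_left]
        exact hσ a haS (fun hc => hmne hc.symm)
      · rw [Equiv.swap_apply_of_ne_of_ne hmj hmne]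
        exact hσ m hm hmj
    · intro σ _; ext x; simp [Equiv.swap_apply_self]
    · intro σ _; ext x; simp [Equiv.swap_apply_self]
  -- Step C : sum over S
  have hdisj : ∀ a ∈ S, ∀ b ∈ S, a ≠ b → Disjoint (F a) (F b) := by
    intro a haS b hbS hab
    rw [Finset.disjoint_left]
    intro σ hσa hσb
    simp only [hF, mem_filter, mem_univ, true_and] at hσa hσb
    exact absurd (hσa b hbS hab.symm) (not_lt.mpr (le_of_lt (hσb a haS hab)))
  have hsum : ∑ a ∈ S, (F a).card = (S.biUnion F).card :=
    (Finset.card_biUnion hdisj).symm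
  have hC : S.card * (F jf).card ≤ Fintype.card (Equiv.Perm (Fin n)) := by
    calc S.card * (F jf).card = ∑ a ∈ S, (F jf).card := by rw [Finset.sum_const, smul_eq_mul]
    _ = ∑ a ∈ S, (F a).card := Finset.sum_congr rfl (fun a ha => (hB a ha).symm)
    _ = (S.biUnion F).card := hsum
    _ ≤ (Finset.univ : Finset (Equiv.Perm (Fin n))).card := Finset.card_le_card (Finset.subset_univ _)
    _ = Fintype.card (Equiv.Perm (Fin n)) := Finset.card_univ
  -- Step D : dist bound on S.card
  have hD : max j k - min j k ≤ S.card := by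
    have : Finset.Icc (min j k) (max j k) ⊆ Finset.image (fun m : Fin n => (m:ℕ)+1) S := by
      intro v hv
      rw [Finset.mem_Icc] at hv
      have hv1 : 1 ≤ v := le_trans hmin1 hv.1
      have hvn : v ≤ n := le_trans hv.2 hmaxn
      have hlt : v - 1 < n := by omega
      refine Finset.mem_image.mpr ⟨⟨v-1, hlt⟩, ?_, show v - 1 + 1 = v by omega⟩
      simp only [hS, mem_filter, mem_univ, true_and]
      exact ⟨show min j k ≤ v - 1 + 1 by omega, show v - 1 + 1 ≤ max j k by omega⟩
    calc max j k - min j k ≤ (Finset.Icc (min j k) (max j k)).card := by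
          rw [Nat.card_Icc]; omega
    _ ≤ (Finset.image (fun m : Fin n => (m:ℕ)+1) S).card := Finset.card_le_card this
    _ ≤ S.card := Finset.card_image_le
  -- conclude
  have habs : |(k : ℝ) - ((jf:ℕ)+1)| = ((max j k - min j k : ℕ) : ℝ) := by
    have hcast : ((↑(jf:ℕ):ℝ)+1) = ((j:ℕ):ℝ) := by rw [hj]; push_cast; ring
    rw [hcast]
    rcases le_total j k with h | h
    · rw [max_eq_right h, min_eq_left h, Nat.cast_sub h, abs_of_nonneg (by
        simp only [sub_nonneg]; exact_mod_cast h)]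
    · rw [max_eq_left h, min_eq_right h, Nat.cast_sub h, abs_of_nonpos (by
        simp only [sub_nonpos]; exact_mod_cast h), neg_sub]
  rw [hA, habs]
  calc ((max j k - min j k : ℕ) : ℝ) * ((F jf).card : ℝ)
      ≤ (S.card : ℝ) * ((F jf).card : ℝ) := by
        apply mul_le_mul_of_nonneg_right _ (Nat.cast_nonneg _)
        exact_mod_cast hD
    _ ≤ (Fintype.card (Equiv.Perm (Fin n)) : ℝ) := by exact_mod_cast hC

/-- In the random permutation model on `{1,…,n}`: for every `1 ≤ k ≤ n`,
`E[|k·D_k(n) − W_k(n)|] ≤ k + n`. -/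
theorem expectation_abs_kD_sub_W_le (n k : ℕ) (hk1 : 1 ≤ k) (hk2 : k ≤ n) :
    expPerm (fun σ : Equiv.Perm (Fin n) => |(k : ℝ) * depthD σ k - weightW σ k|)
      ≤ (k : ℝ) + n := by
  classical
  have hcard : 0 < (Fintype.card (Equiv.Perm (Fin n)) : ℝ) := by
    exact_mod_cast Fintype.card_pos
  rw [expPerm, div_le_iff₀ hcard]
  set N : ℝ := (Fintype.card (Equiv.Perm (Fin n)) : ℝ) with hN
  have hpt : ∀ σ : Equiv.Perm (Fin n),
      |(k : ℝ) * depthD σ k - weightW σ k|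
        ≤ (∑ j : Fin n, |(k:ℝ) - ((j:ℕ)+1)| * ind (eventA σ ((j:ℕ)+1) k)) + k := by
    intro σ
    have h1 : (k : ℝ) * depthD σ k - weightW σ k
        = (∑ j : Fin n, ((k:ℝ) - ((j:ℕ)+1)) * ind (eventA σ ((j:ℕ)+1) k)) - k := by
      rw [depthD, weightW, mul_sub, mul_one, Finset.mul_sum, sub_right_comm,
        ← Finset.sum_sub_distrib]
      congr 1
      exact Finset.sum_congr rfl fun j _ => by ring
    rw [h1, sub_eq_add_neg]
    refine le_trans (abs_add_le _ _) ?_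
    rw [abs_neg, Nat.abs_cast]
    gcongr
    refine le_trans (Finset.abs_sum_le_sum_abs _ _) ?_
    apply Finset.sum_le_sum
    intro j _
    rw [abs_mul]
    gcongr
    rw [ind]
    split <;> simp
  have hind : ∀ (j : Fin n), (∑ σ : Equiv.Perm (Fin n), ind (eventA σ ((j:ℕ)+1) k))
      = ((Finset.univ.filter fun σ : Equiv.Perm (Fin n) => eventA σ ((j:ℕ)+1) k).card : ℝ) := by
    intro j
    rw [← Finset.sum_boole]
    exact Finset.sum_congr rfl fun σ _ => by rw [ind]
  calc ∑ σ : Equiv.Perm (Fin n), |(k : ℝ) * depthD σ k - weightW σ k|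
      ≤ ∑ σ : Equiv.Perm (Fin n),
          ((∑ j : Fin n, |(k:ℝ) - ((j:ℕ)+1)| * ind (eventA σ ((j:ℕ)+1) k)) + k) :=
        Finset.sum_le_sum fun σ _ => hpt σ
    _ = (∑ j : Fin n, |(k:ℝ) - ((j:ℕ)+1)| *
          ((Finset.univ.filter fun σ : Equiv.Perm (Fin n) => eventA σ ((j:ℕ)+1) k).card : ℝ))
        + (k:ℝ) * N := by
        rw [Finset.sum_add_distrib, Finset.sum_const, Finset.card_univ, nsmul_eq_mul,
          Finset.sum_comm]
        congr 1
        · exact Finset.sum_congr rfl fun j _ => by rw [← Finset.mul_sum, hind j]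
        · rw [hN]; ring
    _ ≤ (∑ _j : Fin n, N) + (k:ℝ) * N := by
        gcongr with j hj
        exact key j k hk1 hk2
    _ = ((k:ℝ) + n) * N := by
        rw [Finset.sum_const, Finset.card_univ, Fintype.card_fin, nsmul_eq_mul]; ring
end
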